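/- arXiv:2012.08324 — 3 statements merged into one kernel-verified Lean document; each statement's English description precedes it below -/
import Mathlib

section
/- A 2-copula C is stochastically increasing in the first component if and only if the associated Markov operator T_C maps decreasing integrable functions on [0,1] to decreasing functions; C is stochastically decreasing in the first component if and only if T_C maps decreasing functions to increasing functions. -/
open MeasureTheory Set Filter

def IsCopula (C : ℝ → ℝ → ℝ) : Prop :=
  (∀ u ∈ Icc (0:ℝ) 1, C u 0 = 0 ∧ C u 1 = u) ∧
  (∀ v ∈ Icc (0:ℝ) 1, C 0 v = 0 ∧ C 1 v = v) ∧
  (∀ u₁ u₂ v₁ v₂ : ℝ, u₁ ∈ Icc (0:ℝ) 1 → u₂ ∈ Icc (0:ℝ) 1 →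
    v₁ ∈ Icc (0:ℝ) 1 → v₂ ∈ Icc (0:ℝ) 1 → u₁ ≤ u₂ → v₁ ≤ v₂ →
    0 ≤ C u₂ v₂ - C u₂ v₁ - C u₁ v₂ + C u₁ v₁)

/-- Markov product of two copulas: (C₁ * C₂)(u,v) = ∫₀¹ ∂₂C₁(u,t) ∂₁C₂(t,v) dt. -/
noncomputable def MarkovProduct (C₁ C₂ : ℝ → ℝ → ℝ) (u v : ℝ) : ℝ :=
  ∫ t in (0:ℝ)..1, deriv (fun s => C₁ u s) t * deriv (fun s => C₂ s v) t

/-- Stochastically increasing in the first component: u ↦ C(u,v) is concave for each v. -/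
def StochIncr (C : ℝ → ℝ → ℝ) : Prop :=
  ∀ v ∈ Icc (0:ℝ) 1, ConcaveOn ℝ (Icc (0:ℝ) 1) (fun u => C u v)

/-- Stochastically decreasing in the first component: u ↦ C(u,v) is convex for each v. -/
def StochDecr (C : ℝ → ℝ → ℝ) : Prop :=
  ∀ v ∈ Icc (0:ℝ) 1, ConvexOn ℝ (Icc (0:ℝ) 1) (fun u => C u v)

/-- The Markov operator associated to a copula: T_C f (u) = ∂_u ∫₀¹ ∂_v C(u,v) f(v) dv. -/
noncomputable def MarkovOp (C : ℝ → ℝ → ℝ) (f : ℝ → ℝ) (u : ℝ) : ℝ :=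
  deriv (fun x => ∫ v in (0:ℝ)..1, deriv (fun w => C x w) v * f v) u

namespace CopProof




/-! ### Clamp -/

noncomputable def cl (x : ℝ) : ℝ := max 0 (min 1 x)

lemma cl_mono : Monotone cl := fun x y hxy => by
  unfold cl; exact max_le_max le_rfl (min_le_min le_rfl hxy)

lemma cl_mem (x : ℝ) : cl x ∈ Icc (0:ℝ) 1 :=
  ⟨le_max_left _ _, max_le (by norm_num) (min_le_left _ _)⟩

lemma cl_eq {x : ℝ} (hx : x ∈ Icc (0:ℝ) 1) : cl x = x := by
  unfold cl; rw [min_eq_right hx.2, max_eq_right hx.1]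

lemma cl_lipschitz : LipschitzWith 1 cl :=
  (LipschitzWith.id.const_min 1).const_max 0

lemma cl_zero : cl 0 = 0 := cl_eq ⟨le_rfl, zero_le_one⟩
lemma cl_one : cl 1 = 1 := cl_eq ⟨zero_le_one, le_rfl⟩

lemma cl_of_nonpos {x : ℝ} (hx : x ≤ 0) : cl x = 0 := by
  unfold cl; rw [max_eq_left]; exact (min_le_right _ _).trans hx

lemma cl_of_one_le {x : ℝ} (hx : 1 ≤ x) : cl x = 1 := by
  unfold cl; rw [min_eq_left hx, max_eq_right zero_le_one]

lemma cl_eventuallyEq_id {u : ℝ} (hu : u ∈ Ioo (0:ℝ) 1) : ∀ᶠ x in nhds u, cl x = x := by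
  filter_upwards [Ioo_mem_nhds hu.1 hu.2] with x hx using cl_eq ⟨hx.1.le, hx.2.le⟩

/-- Real Lipschitz increment estimate. -/
lemma lip_sub_le {φ : ℝ → ℝ} {K : NNReal} (hl : LipschitzWith K φ) {x y : ℝ} (hxy : x ≤ y) :
    φ y - φ x ≤ K * (y - x) := by
  have := hl.dist_le_mul y x
  rw [Real.dist_eq, Real.dist_eq, abs_of_nonneg (sub_nonneg.2 hxy)] at this
  exact (le_abs_self _).trans this

/-! ### Stieltjes measure of a continuous monotone function -/

lemma stieltjes_apply {φ : ℝ → ℝ} (hm : Monotone φ) (hc : Continuous φ) (x : ℝ) :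
    hm.stieltjesFunction x = φ x := by
  rw [hm.stieltjesFunction_eq]
  exact rightLim_eq_of_tendsto
    ((hc.tendsto x).mono_left nhdsWithin_le_nhds)

lemma stieltjes_measure_Ioc {φ : ℝ → ℝ} (hm : Monotone φ) (hc : Continuous φ) (a b : ℝ) :
    hm.stieltjesFunction.measure (Ioc a b) = ENNReal.ofReal (φ b - φ a) := by
  rw [StieltjesFunction.measure_Ioc, stieltjes_apply hm hc, stieltjes_apply hm hc]

/-- deriv of a monotone function is nonnegative (junk value 0 included). -/
lemma deriv_nonneg_of_monotone {φ : ℝ → ℝ} (hm : Monotone φ) (x : ℝ) : 0 ≤ deriv φ x := by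
  by_cases hd : DifferentiableAt ℝ φ x
  · have h := hd.hasDerivAt
    rw [hasDerivAt_iff_tendsto_slope] at h
    have h' : Tendsto (slope φ x) (nhdsWithin x (Ioi x)) (nhds (deriv φ x)) :=
      h.mono_left (nhdsWithin_mono x (fun y hy => ne_of_gt hy))
    refine ge_of_tendsto h' ?_
    filter_upwards [self_mem_nhdsWithin] with y hy
    rw [slope_def_field]
    exact div_nonneg (sub_nonneg.2 (hm (le_of_lt hy))) (sub_nonneg.2 (le_of_lt hy))
  · rw [deriv_zero_of_not_differentiableAt hd]

/-- deriv of a K-Lipschitz function is bounded by K. -/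
lemma deriv_le_of_lipschitz {φ : ℝ → ℝ} {K : NNReal} (hl : LipschitzWith K φ) (x : ℝ) :
    |deriv φ x| ≤ K := by
  by_cases hd : DifferentiableAt ℝ φ x
  · have h := hd.hasDerivAt
    rw [hasDerivAt_iff_tendsto_slope] at h
    refine le_of_tendsto h.abs ?_
    filter_upwards [self_mem_nhdsWithin] with y hy
    rw [slope_def_field, abs_div]
    rw [div_le_iff₀ (abs_pos.2 (sub_ne_zero.2 (fun hc => hy (by simpa using hc))))]
    have := hl.dist_le_mul y x
    rw [Real.dist_eq, Real.dist_eq] at this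
    linarith [this]
  · rw [deriv_zero_of_not_differentiableAt hd]; simp

/-- The Stieltjes measure of a monotone `K`-Lipschitz function is at most `K • volume`. -/
lemma stieltjes_le_smul {φ : ℝ → ℝ} (hm : Monotone φ) {K : NNReal} (hl : LipschitzWith K φ) :
    hm.stieltjesFunction.measure ≤ (K : ENNReal) • volume := by
  have hψm : Monotone (fun x => (K : ℝ) * x - φ x) := by
    intro x y hxy
    have h1 : φ y - φ x ≤ K * (y - x) := lip_sub_le hl hxy
    simp only []
    nlinarith
  have hψc : Continuous (fun x => (K : ℝ) * x - φ x) :=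
    (continuous_const.mul continuous_id).sub hl.continuous
  have key : hm.stieltjesFunction.measure + hψm.stieltjesFunction.measure
      = (K : ENNReal) • volume := by
    refine Measure.ext_of_Ioc' _ _ (fun a b hab => ?_) (fun a b hab => ?_)
    · rw [Measure.add_apply, stieltjes_measure_Ioc hm hl.continuous,
        stieltjes_measure_Ioc hψm hψc]
      exact (ENNReal.add_lt_top.2 ⟨ENNReal.ofReal_lt_top, ENNReal.ofReal_lt_top⟩).ne
    · rw [Measure.add_apply, stieltjes_measure_Ioc hm hl.continuous,
        stieltjes_measure_Ioc hψm hψc, Measure.smul_apply, Real.volume_Ioc, smul_eq_mul,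
        ← ENNReal.ofReal_coe_nnreal, ← ENNReal.ofReal_mul K.coe_nonneg,
        ← ENNReal.ofReal_add (sub_nonneg.2 (hm hab.le)) (sub_nonneg.2 (hψm hab.le))]
      ring_nf
  calc hm.stieltjesFunction.measure
      ≤ hm.stieltjesFunction.measure + hψm.stieltjesFunction.measure :=
        Measure.le_add_right le_rfl
    _ = (K : ENNReal) • volume := key

lemma stieltjes_ac {φ : ℝ → ℝ} (hm : Monotone φ) {K : NNReal} (hl : LipschitzWith K φ) :
    hm.stieltjesFunction.measure ≪ volume :=
  Measure.absolutelyContinuous_of_le_smul (stieltjes_le_smul hm hl)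

lemma stieltjes_sigmaFinite {φ : ℝ → ℝ} (hm : Monotone φ) : SigmaFinite hm.stieltjesFunction.measure := by
  infer_instance

lemma stieltjes_withDensity {φ : ℝ → ℝ} (hm : Monotone φ) {K : NNReal} (hl : LipschitzWith K φ) :
    volume.withDensity (hm.stieltjesFunction.measure.rnDeriv volume)
      = hm.stieltjesFunction.measure :=
  Measure.withDensity_rnDeriv_eq _ _ (stieltjes_ac hm hl)

lemma deriv_ae_eq_rnDeriv {φ : ℝ → ℝ} (hm : Monotone φ) :
    deriv φ =ᵐ[volume] fun x => (hm.stieltjesFunction.measure.rnDeriv volume x).toReal := by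
  filter_upwards [hm.ae_hasDerivAt] with x hx using hx.deriv

/-- FTC for monotone Lipschitz functions. -/
lemma ftc_monotone_lipschitz {φ : ℝ → ℝ} (hm : Monotone φ) {K : NNReal}
    (hl : LipschitzWith K φ) {a b : ℝ} (hab : a ≤ b) :
    ∫ w in a..b, deriv φ w = φ b - φ a := by
  rw [intervalIntegral.integral_of_le hab]
  rw [setIntegral_congr_ae measurableSet_Ioc
    (by filter_upwards [deriv_ae_eq_rnDeriv hm] with x hx using fun _ => hx)]
  have : SigmaFinite hm.stieltjesFunction.measure := stieltjes_sigmaFinite hm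
  have hfin : ∀ᵐ x ∂(volume : Measure ℝ),
      hm.stieltjesFunction.measure.rnDeriv volume x < ⊤ :=
    Measure.rnDeriv_lt_top _ _
  rw [integral_toReal ((Measure.measurable_rnDeriv _ _).aemeasurable.restrict)
    (ae_restrict_of_ae hfin)]
  rw [← withDensity_apply _ measurableSet_Ioc, stieltjes_withDensity hm hl,
    stieltjes_measure_Ioc hm hl.continuous,
    ENNReal.toReal_ofReal (sub_nonneg.2 (hm hab))]


/-! ### Copula facts -/

section Copula

variable {C : ℝ → ℝ → ℝ}


variable (hC : IsCopula C)
include hC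

lemma mono_v {x : ℝ} (hx : x ∈ Icc (0:ℝ) 1) {v₁ v₂ : ℝ} (h1 : v₁ ∈ Icc (0:ℝ) 1)
    (h2 : v₂ ∈ Icc (0:ℝ) 1) (h : v₁ ≤ v₂) : C x v₁ ≤ C x v₂ := by
  have := hC.2.2 0 x v₁ v₂ ⟨le_rfl, zero_le_one⟩ hx h1 h2 hx.1 h
  have e1 := (hC.2.1 v₁ h1).1
  have e2 := (hC.2.1 v₂ h2).1
  linarith

lemma lip_v {x : ℝ} (hx : x ∈ Icc (0:ℝ) 1) {v₁ v₂ : ℝ} (h1 : v₁ ∈ Icc (0:ℝ) 1)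
    (h2 : v₂ ∈ Icc (0:ℝ) 1) (h : v₁ ≤ v₂) : C x v₂ - C x v₁ ≤ v₂ - v₁ := by
  have := hC.2.2 x 1 v₁ v₂ hx ⟨zero_le_one, le_rfl⟩ h1 h2 hx.2 h
  have e1 := (hC.2.1 v₁ h1).2
  have e2 := (hC.2.1 v₂ h2).2
  linarith

lemma mono_u {v : ℝ} (hv : v ∈ Icc (0:ℝ) 1) {u₁ u₂ : ℝ} (h1 : u₁ ∈ Icc (0:ℝ) 1)
    (h2 : u₂ ∈ Icc (0:ℝ) 1) (h : u₁ ≤ u₂) : C u₁ v ≤ C u₂ v := by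
  have := hC.2.2 u₁ u₂ 0 v h1 h2 ⟨le_rfl, zero_le_one⟩ hv h hv.1
  have e1 := (hC.1 u₁ h1).1
  have e2 := (hC.1 u₂ h2).1
  linarith

lemma lip_u {v : ℝ} (hv : v ∈ Icc (0:ℝ) 1) {u₁ u₂ : ℝ} (h1 : u₁ ∈ Icc (0:ℝ) 1)
    (h2 : u₂ ∈ Icc (0:ℝ) 1) (h : u₁ ≤ u₂) : C u₂ v - C u₁ v ≤ u₂ - u₁ := by
  have := hC.2.2 u₁ u₂ v 1 h1 h2 hv ⟨zero_le_one, le_rfl⟩ h hv.2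
  have e1 := (hC.1 u₁ h1).2
  have e2 := (hC.1 u₂ h2).2
  linarith

/-- `ψ x w = C x (cl w)`, the clamped vertical section. -/
lemma psi_mono {x : ℝ} (hx : x ∈ Icc (0:ℝ) 1) : Monotone (fun w => C x (cl w)) :=
  fun w₁ w₂ h => mono_v hC hx (cl_mem _) (cl_mem _) (cl_mono h)

lemma psi_lipschitz {x : ℝ} (hx : x ∈ Icc (0:ℝ) 1) :
    LipschitzWith 1 (fun w => C x (cl w)) := by
  refine LipschitzWith.of_dist_le_mul (fun w₁ w₂ => ?_)
  rw [Real.dist_eq, Real.dist_eq, NNReal.coe_one, one_mul]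
  rcases le_total w₁ w₂ with h | h
  · rw [abs_of_nonpos (by linarith [mono_v hC hx (cl_mem w₁) (cl_mem w₂) (cl_mono h)] : C x (cl w₁) - C x (cl w₂) ≤ 0)]
    have h1 := lip_v hC hx (cl_mem w₁) (cl_mem w₂) (cl_mono h)
    have h2 : cl w₂ - cl w₁ ≤ w₂ - w₁ := by
      have := lip_sub_le cl_lipschitz h
      simpa using this
    have := abs_sub_abs_le_abs_sub w₂ w₁
    calc -(C x (cl w₁) - C x (cl w₂)) ≤ cl w₂ - cl w₁ := by linarith
      _ ≤ w₂ - w₁ := h2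
      _ ≤ |w₁ - w₂| := by rw [abs_sub_comm]; exact le_abs_self _
  · rw [abs_of_nonneg (by linarith [mono_v hC hx (cl_mem w₂) (cl_mem w₁) (cl_mono h)] : 0 ≤ C x (cl w₁) - C x (cl w₂))]
    have h1 := lip_v hC hx (cl_mem w₂) (cl_mem w₁) (cl_mono h)
    have h2 : cl w₁ - cl w₂ ≤ w₁ - w₂ := by
      have := lip_sub_le cl_lipschitz h
      simpa using this
    calc C x (cl w₁) - C x (cl w₂) ≤ cl w₁ - cl w₂ := by linarith
      _ ≤ w₁ - w₂ := h2
      _ ≤ |w₁ - w₂| := le_abs_self _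

lemma phi_mono {v : ℝ} (hv : v ∈ Icc (0:ℝ) 1) : Monotone (fun x => C (cl x) v) :=
  fun x₁ x₂ h => mono_u hC hv (cl_mem _) (cl_mem _) (cl_mono h)

lemma phi_lipschitz {v : ℝ} (hv : v ∈ Icc (0:ℝ) 1) :
    LipschitzWith 1 (fun x => C (cl x) v) := by
  refine LipschitzWith.of_dist_le_mul (fun x₁ x₂ => ?_)
  rw [Real.dist_eq, Real.dist_eq, NNReal.coe_one, one_mul]
  rcases le_total x₁ x₂ with h | h
  · rw [abs_of_nonpos (by linarith [mono_u hC hv (cl_mem x₁) (cl_mem x₂) (cl_mono h)] : C (cl x₁) v - C (cl x₂) v ≤ 0)]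
    have h1 := lip_u hC hv (cl_mem x₁) (cl_mem x₂) (cl_mono h)
    have h2 : cl x₂ - cl x₁ ≤ x₂ - x₁ := by simpa using lip_sub_le cl_lipschitz h
    calc -(C (cl x₁) v - C (cl x₂) v) ≤ cl x₂ - cl x₁ := by linarith
      _ ≤ x₂ - x₁ := h2
      _ ≤ |x₁ - x₂| := by rw [abs_sub_comm]; exact le_abs_self _
  · rw [abs_of_nonneg (by linarith [mono_u hC hv (cl_mem x₂) (cl_mem x₁) (cl_mono h)] : 0 ≤ C (cl x₁) v - C (cl x₂) v)]
    have h1 := lip_u hC hv (cl_mem x₂) (cl_mem x₁) (cl_mono h)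
    have h2 : cl x₁ - cl x₂ ≤ x₁ - x₂ := by simpa using lip_sub_le cl_lipschitz h
    calc C (cl x₁) v - C (cl x₂) v ≤ cl x₁ - cl x₂ := by linarith
      _ ≤ x₁ - x₂ := h2
      _ ≤ |x₁ - x₂| := le_abs_self _

lemma psi_of_nonpos {x w : ℝ} (hx : x ∈ Icc (0:ℝ) 1) (hw : w ≤ 0) : C x (cl w) = 0 := by
  rw [cl_of_nonpos hw]; exact (hC.1 x hx).1

lemma psi_of_one_le {x w : ℝ} (hx : x ∈ Icc (0:ℝ) 1) (hw : 1 ≤ w) : C x (cl w) = x := by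
  rw [cl_of_one_le hw]; exact (hC.1 x hx).2

lemma psi_tendsto_atBot {x : ℝ} (hx : x ∈ Icc (0:ℝ) 1) :
    Tendsto (fun w => C x (cl w)) atBot (nhds 0) := by
  refine Tendsto.congr' ?_ tendsto_const_nhds
  filter_upwards [eventually_le_atBot (0:ℝ)] with w hw
  exact (psi_of_nonpos hC hx hw).symm

lemma psi_tendsto_atTop {x : ℝ} (hx : x ∈ Icc (0:ℝ) 1) :
    Tendsto (fun w => C x (cl w)) atTop (nhds x) := by
  refine Tendsto.congr' ?_ tendsto_const_nhds
  filter_upwards [eventually_ge_atTop (1:ℝ)] with w hw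
  exact (psi_of_one_le hC hx hw).symm

/-- two-increasingness of the clamped sections -/
lemma psi_diff_mono {x₁ x₂ : ℝ} (h1 : x₁ ∈ Icc (0:ℝ) 1) (h2 : x₂ ∈ Icc (0:ℝ) 1)
    (h : x₁ ≤ x₂) : Monotone (fun w => C x₂ (cl w) - C x₁ (cl w)) := by
  intro w₁ w₂ hw
  have := hC.2.2 x₁ x₂ (cl w₁) (cl w₂) h1 h2 (cl_mem _) (cl_mem _) h (cl_mono hw)
  simp only []
  linarith

end Copula

/-! ### Stochastic dominance -/

lemma measure_Iio_le {ν₁ ν₂ : Measure ℝ} (hcdf : ∀ v, ν₁ (Iic v) ≤ ν₂ (Iic v)) (m : ℝ) :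
    ν₁ (Iio m) ≤ ν₂ (Iio m) := by
  have hset : Iio m = ⋃ n : ℕ, Iic (m - 1/(n+1)) := by
    ext a
    simp only [mem_Iio, mem_iUnion, mem_Iic]
    constructor
    · intro h
      obtain ⟨n, hn⟩ := exists_nat_one_div_lt (sub_pos.2 h)
      exact ⟨n, by push_cast at hn ⊢; linarith⟩
    · rintro ⟨n, hn⟩
      have : (0:ℝ) < 1/(n+1) := by positivity
      linarith
  have hmono : Monotone (fun n : ℕ => Iic (m - 1/(n+1:ℝ))) := by
    intro n₁ n₂ h
    apply Iic_subset_Iic.2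
    have hc : (n₁:ℝ) ≤ n₂ := Nat.cast_le.2 h
    have h1 : (1:ℝ)/(n₂+1) ≤ 1/(n₁+1) := by
      apply one_div_le_one_div_of_le (by positivity)
      linarith
    linarith
  rw [hset, hmono.directed_le.measure_iUnion, hmono.directed_le.measure_iUnion]
  exact iSup_mono (fun n => hcdf _)

lemma lowerSet_measure_le {ν₁ ν₂ : Measure ℝ} (hcdf : ∀ v, ν₁ (Iic v) ≤ ν₂ (Iic v))
    (hmass : ν₁ univ ≤ ν₂ univ) {S : Set ℝ} (hS : IsLowerSet S) : ν₁ S ≤ ν₂ S := by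
  rcases eq_empty_or_nonempty S with rfl | hne
  · simp
  by_cases huniv : S = univ
  · rw [huniv]; exact hmass
  have hbdd : BddAbove S := by
    obtain ⟨b, hb⟩ : ∃ b, b ∉ S := by
      by_contra h; push_neg at h; exact huniv (eq_univ_of_forall h)
    exact ⟨b, fun a ha => by
      by_contra hab; push_neg at hab
      exact hb (hS hab.le ha)⟩
  by_cases hmem : sSup S ∈ S
  · have hseq : S = Iic (sSup S) :=
      Subset.antisymm (fun a ha => le_csSup hbdd ha) (fun a ha => hS ha hmem)
    rw [hseq]; exact hcdf _
  · have hseq : S = Iio (sSup S) := by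
      apply Subset.antisymm
      · exact fun a ha => lt_of_le_of_ne (le_csSup hbdd ha) (fun h => hmem (h ▸ ha))
      · intro a ha
        obtain ⟨s, hs, has⟩ := exists_lt_of_lt_csSup hne ha
        exact hS has.le hs
    rw [hseq]; exact measure_Iio_le hcdf _

lemma integrable_of_antitone_bounded {ν : Measure ℝ} [IsFiniteMeasure ν]
    {f : ℝ → ℝ} (hf : Antitone f) {lo hi : ℝ} (hbd : ∀ x, f x ∈ Icc lo hi) :
    Integrable f ν := by
  refine ⟨hf.measurable.aestronglyMeasurable, HasFiniteIntegral.of_bounded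
    (C := max |lo| |hi|) (ae_of_all _ fun x => ?_)⟩
  rw [Real.norm_eq_abs, abs_le]
  refine ⟨?_, ?_⟩
  · have h1 := (hbd x).1
    have h2 := neg_abs_le lo
    have h3 := le_max_left |lo| |hi|
    linarith
  · have h1 := (hbd x).2
    have h2 := le_abs_self hi
    have h3 := le_max_right |lo| |hi|
    linarith

lemma integral_eq_layer {ν : Measure ℝ} [IsFiniteMeasure ν]
    {f : ℝ → ℝ} (hf : Antitone f) {lo hi : ℝ} (hbd : ∀ x, f x ∈ Icc lo hi) :
    ∫ x, f x ∂ν = (∫⁻ x, ENNReal.ofReal (f x - lo) ∂ν).toReal + (ν univ).toReal * lo := by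
  have hint : Integrable f ν := integrable_of_antitone_bounded hf hbd
  have hφint : Integrable (fun x => f x - lo) ν := hint.sub (integrable_const lo)
  have h1 : ∫ x, f x ∂ν = ∫ x, (f x - lo) + lo ∂ν := by congr 1; funext x; ring
  rw [h1, integral_add hφint (integrable_const lo), integral_const,
    integral_eq_lintegral_of_nonneg_ae (ae_of_all _ fun x => sub_nonneg.2 (hbd x).1)
      (hf.measurable.sub measurable_const).aestronglyMeasurable]
  simp [smul_eq_mul, measureReal_def]

lemma stochastic_dominance (ν₁ ν₂ : Measure ℝ) [IsFiniteMeasure ν₁] [IsFiniteMeasure ν₂]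
    (hcdf : ∀ v, ν₁ (Iic v) ≤ ν₂ (Iic v)) (hmass : ν₁ univ = ν₂ univ)
    {f : ℝ → ℝ} (hf : Antitone f) {lo hi : ℝ} (hbd : ∀ x, f x ∈ Icc lo hi) :
    ∫ x, f x ∂ν₁ ≤ ∫ x, f x ∂ν₂ := by
  have hφm : Measurable (fun x => f x - lo) := hf.measurable.sub measurable_const
  have hφnn : ∀ x, (0:ℝ) ≤ f x - lo := fun x => sub_nonneg.2 (hbd x).1
  have key : (∫⁻ x, ENNReal.ofReal (f x - lo) ∂ν₁) ≤ ∫⁻ x, ENNReal.ofReal (f x - lo) ∂ν₂ := by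
    rw [lintegral_eq_lintegral_meas_le ν₁ (ae_of_all _ hφnn) hφm.aemeasurable,
        lintegral_eq_lintegral_meas_le ν₂ (ae_of_all _ hφnn) hφm.aemeasurable]
    refine lintegral_mono (fun t => ?_)
    refine lowerSet_measure_le hcdf hmass.le (fun a b hba ha => ?_)
    simp only [mem_setOf_eq] at ha ⊢
    have := hf hba
    linarith
  have hfin : (∫⁻ x, ENNReal.ofReal (f x - lo) ∂ν₂) ≠ ⊤ := by
    refine ne_top_of_le_ne_top ?_ (lintegral_mono (g := fun _ => ENNReal.ofReal (hi - lo))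
      (fun x => ENNReal.ofReal_le_ofReal (by linarith [(hbd x).2])))
    rw [lintegral_const]
    exact ENNReal.mul_ne_top ENNReal.ofReal_ne_top (measure_ne_top _ _)
  rw [integral_eq_layer hf hbd, integral_eq_layer hf hbd, hmass]
  have := ENNReal.toReal_mono hfin key
  linarith

/-! ### The measures associated to vertical sections, and the integral representation -/

section Repr

variable {C : ℝ → ℝ → ℝ} (hC : IsCopula C)
include hC

lemma psi_stieltjes_coe {x : ℝ} (hx : x ∈ Icc (0:ℝ) 1) :
    ((psi_mono hC hx).stieltjesFunction : ℝ → ℝ) = fun w => C x (cl w) :=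
  funext (stieltjes_apply _ (psi_lipschitz hC hx).continuous)

lemma psi_measure_Iic {x : ℝ} (hx : x ∈ Icc (0:ℝ) 1) (v : ℝ) :
    (psi_mono hC hx).stieltjesFunction.measure (Iic v) = ENNReal.ofReal (C x (cl v)) := by
  rw [StieltjesFunction.measure_Iic _ (l := 0) (by
    rw [psi_stieltjes_coe hC hx]; exact psi_tendsto_atBot hC hx) v]
  rw [psi_stieltjes_coe hC hx, sub_zero]

lemma psi_measure_univ {x : ℝ} (hx : x ∈ Icc (0:ℝ) 1) :
    (psi_mono hC hx).stieltjesFunction.measure univ = ENNReal.ofReal x := by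
  rw [StieltjesFunction.measure_univ _ (l := 0) (u := x)
    (by rw [psi_stieltjes_coe hC hx]; exact psi_tendsto_atBot hC hx)
    (by rw [psi_stieltjes_coe hC hx]; exact psi_tendsto_atTop hC hx), sub_zero]

lemma psi_measure_finite {x : ℝ} (hx : x ∈ Icc (0:ℝ) 1) :
    IsFiniteMeasure (psi_mono hC hx).stieltjesFunction.measure :=
  ⟨by rw [psi_measure_univ hC hx]; exact ENNReal.ofReal_lt_top⟩

lemma psi_measure_compl_Ioc {x : ℝ} (hx : x ∈ Icc (0:ℝ) 1) :
    (psi_mono hC hx).stieltjesFunction.measure ((Ioc (0:ℝ) 1)ᶜ) = 0 := by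
  have h1 : (psi_mono hC hx).stieltjesFunction.measure (Iic 0) = 0 := by
    rw [psi_measure_Iic hC hx, cl_zero, (hC.1 x hx).1, ENNReal.ofReal_zero]
  have h2 : (psi_mono hC hx).stieltjesFunction.measure (Ioi 1) = 0 := by
    have hle := StieltjesFunction.measure_Ici (psi_mono hC hx).stieltjesFunction (l := x)
      (by rw [psi_stieltjes_coe hC hx]; exact psi_tendsto_atTop hC hx) 1
    have he : Function.leftLim ((psi_mono hC hx).stieltjesFunction : ℝ → ℝ) 1 = x := by
      rw [psi_stieltjes_coe hC hx]
      rw [leftLim_eq_of_tendsto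
        (((psi_lipschitz hC hx).continuous.tendsto 1).mono_left nhdsWithin_le_nhds)]
      show C x (cl 1) = x
      rw [cl_one]
      exact (hC.1 x hx).2
    rw [he, sub_self, ENNReal.ofReal_zero] at hle
    exact le_antisymm (le_trans (measure_mono Ioi_subset_Ici_self) hle.le) (zero_le)
  have hsub : (Ioc (0:ℝ) 1)ᶜ ⊆ Iic 0 ∪ Ioi 1 := by
    intro w hw
    simp only [mem_compl_iff, mem_Ioc, not_and_or, not_lt, not_le] at hw
    rcases hw with h | h
    · exact Or.inl h
    · exact Or.inr h
  exact le_antisymm (le_trans (measure_mono hsub)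
    (le_trans (measure_union_le _ _) (by rw [h1, h2, add_zero]))) (zero_le)

/-- The integral representation: the inner integral of the Markov operator equals integration
against the section measure. -/
lemma J_repr {x : ℝ} (hx : x ∈ Icc (0:ℝ) 1) {g : ℝ → ℝ} (hg : Antitone g)
    {lo hi : ℝ} (hbd : ∀ w, g w ∈ Icc lo hi) :
    ∫ w in (0:ℝ)..1, deriv (fun w => C x (cl w)) w * g w
      = ∫ w, g w ∂((psi_mono hC hx).stieltjesFunction.measure) := by
  set μ := (psi_mono hC hx).stieltjesFunction.measure with hμ
  set rn := μ.rnDeriv volume with hrn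
  have hwd : volume.withDensity rn = μ := stieltjes_withDensity _ (psi_lipschitz hC hx)
  have hrn_meas : Measurable rn := Measure.measurable_rnDeriv _ _
  have : SigmaFinite μ := stieltjes_sigmaFinite _
  have hrn_fin : ∀ᵐ w ∂(volume : Measure ℝ), rn w < ⊤ := Measure.rnDeriv_lt_top _ _
  have hrn_zero : ∀ᵐ w ∂(volume.restrict (Ioc (0:ℝ) 1)ᶜ), rn w = 0 := by
    have h0 : ∫⁻ w in (Ioc (0:ℝ) 1)ᶜ, rn w ∂volume = 0 := by
      rw [← withDensity_apply _ (measurableSet_Ioc.compl), hwd]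
      exact psi_measure_compl_Ioc hC hx
    exact (lintegral_eq_zero_iff hrn_meas).1 h0
  -- bound on deriv/rnDeriv
  have hderiv_eq : deriv (fun w => C x (cl w)) =ᵐ[volume] fun w => (rn w).toReal :=
    deriv_ae_eq_rnDeriv _
  have hrn_le : ∀ᵐ w ∂(volume : Measure ℝ), (rn w).toReal ≤ 1 := by
    filter_upwards [hderiv_eq] with w hw
    rw [← hw]
    have := deriv_le_of_lipschitz (psi_lipschitz hC hx) w
    simpa using (abs_le.1 this).2
  have hrn_nonneg : ∀ w, (0:ℝ) ≤ (rn w).toReal := fun w => ENNReal.toReal_nonneg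
  set B := max |lo| |hi| with hB
  have hgB : ∀ w, ‖g w‖ ≤ B := by
    intro w
    rw [Real.norm_eq_abs, abs_le]
    refine ⟨?_, ?_⟩
    · have h1 := (hbd w).1
      have h2 := neg_abs_le lo
      have h3 := le_max_left |lo| |hi|
      linarith
    · have h1 := (hbd w).2
      have h2 := le_abs_self hi
      have h3 := le_max_right |lo| |hi|
      linarith
  have hB0 : 0 ≤ B := le_trans (abs_nonneg lo) (le_max_left _ _)
  -- integrability of the density-weighted integrand
  have hF_meas : Measurable (fun w => (rn w).toReal * g w) :=
    hrn_meas.ennreal_toReal.mul hg.measurable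
  have hF_int : Integrable (fun w => (rn w).toReal * g w) volume := by
    refine Integrable.mono' (g := (Ioc (0:ℝ) 1).indicator (fun _ => B))
      ((integrable_indicator_iff measurableSet_Ioc).2 (integrableOn_const
        (lt_top_iff_ne_top.1 (by rw [Real.volume_Ioc]; exact ENNReal.ofReal_lt_top))))
      hF_meas.aestronglyMeasurable ?_
    have hz : ∀ᵐ w ∂(volume : Measure ℝ), w ∈ (Ioc (0:ℝ) 1)ᶜ → rn w = 0 :=
      (ae_restrict_iff' (measurableSet_Ioc.compl)).1 hrn_zero
    filter_upwards [hrn_le, hz] with w h1 h2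
    by_cases hw : w ∈ Ioc (0:ℝ) 1
    · rw [indicator_of_mem hw, Real.norm_eq_abs, abs_mul,
        abs_of_nonneg (hrn_nonneg w)]
      calc (rn w).toReal * |g w| ≤ 1 * B :=
            mul_le_mul h1 (hgB w) (abs_nonneg _) zero_le_one
        _ = B := one_mul B
    · rw [indicator_of_notMem hw, h2 hw]
      simp
  -- step 1 : interval integral to set integral with density integrand
  have step1 : ∫ w in (0:ℝ)..1, deriv (fun w => C x (cl w)) w * g w
      = ∫ w in Ioc (0:ℝ) 1, (rn w).toReal * g w ∂volume := by
    rw [intervalIntegral.integral_of_le (zero_le_one)]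
    refine setIntegral_congr_ae measurableSet_Ioc ?_
    filter_upwards [hderiv_eq] with w hw
    intro _
    rw [hw]
  -- step 2 : extend to the whole line
  have step2 : ∫ w in Ioc (0:ℝ) 1, (rn w).toReal * g w ∂volume
      = ∫ w, (rn w).toReal * g w ∂volume := by
    have hcompl : ∫ w in (Ioc (0:ℝ) 1)ᶜ, (rn w).toReal * g w ∂volume = 0 := by
      rw [setIntegral_congr_ae (measurableSet_Ioc.compl)
        (by filter_upwards [(ae_restrict_iff' (measurableSet_Ioc.compl)).1 hrn_zero] with w hw
            intro hmem
            rw [hw hmem]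
            simp : ∀ᵐ w ∂(volume : Measure ℝ), w ∈ (Ioc (0:ℝ) 1)ᶜ →
              (rn w).toReal * g w = 0)]
      simp
    rw [← integral_add_compl measurableSet_Ioc hF_int, hcompl, add_zero]
  -- step 3 : withDensity
  have step3 : ∫ w, (rn w).toReal * g w ∂volume = ∫ w, g w ∂μ := by
    rw [← hwd]
    have hcongr : volume.withDensity rn
        = volume.withDensity (fun w => ((rn w).toNNReal : ENNReal)) := by
      refine withDensity_congr_ae ?_
      filter_upwards [hrn_fin] with w hw
      rw [ENNReal.coe_toNNReal hw.ne]
    rw [hcongr, integral_withDensity_eq_integral_smul (hrn_meas.ennreal_toNNReal) g]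
    congr 1
  rw [step1, step2, step3]

end Repr

/-! ### Concavity and Lipschitz continuity of the smoothed inner integral -/

section JProps

variable {C : ℝ → ℝ → ℝ} (hC : IsCopula C)
include hC

lemma psi_nonneg {x : ℝ} (hx : x ∈ Icc (0:ℝ) 1) (w : ℝ) : 0 ≤ C x (cl w) := by
  have h0 : C x 0 = 0 := (hC.1 x hx).1
  have := mono_v hC hx (left_mem_Icc.2 zero_le_one) (cl_mem w) (cl_mem w).1
  linarith

lemma J_concave (hSI : ∀ v ∈ Icc (0:ℝ) 1, ConcaveOn ℝ (Icc (0:ℝ) 1) (fun u => C u v))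
    {g : ℝ → ℝ} (hg : Antitone g) {lo hi : ℝ} (hbd : ∀ w, g w ∈ Icc lo hi) :
    ConcaveOn ℝ (Icc (0:ℝ) 1)
      (fun x => ∫ w in (0:ℝ)..1, deriv (fun w => C x (cl w)) w * g w) := by
  refine ⟨convex_Icc 0 1, fun x₁ hx₁ x₂ hx₂ a b ha hb hab => ?_⟩
  have hm : a • x₁ + b • x₂ ∈ Icc (0:ℝ) 1 := (convex_Icc 0 1) hx₁ hx₂ ha hb hab
  simp only [smul_eq_mul] at hm ⊢
  rw [J_repr hC hx₁ hg hbd, J_repr hC hx₂ hg hbd, J_repr hC hm hg hbd]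
  set μ₁ := (psi_mono hC hx₁).stieltjesFunction.measure
  set μ₂ := (psi_mono hC hx₂).stieltjesFunction.measure
  set μm := (psi_mono hC hm).stieltjesFunction.measure
  haveI := psi_measure_finite hC hx₁
  haveI := psi_measure_finite hC hx₂
  haveI := psi_measure_finite hC hm
  set ν₁ := ENNReal.ofReal a • μ₁ + ENNReal.ofReal b • μ₂ with hν₁
  haveI h₁fin : IsFiniteMeasure (ENNReal.ofReal a • μ₁) :=
    ⟨by rw [Measure.smul_apply, smul_eq_mul]
        exact ENNReal.mul_lt_top ENNReal.ofReal_lt_top (measure_lt_top _ _)⟩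
  haveI h₂fin : IsFiniteMeasure (ENNReal.ofReal b • μ₂) :=
    ⟨by rw [Measure.smul_apply, smul_eq_mul]
        exact ENNReal.mul_lt_top ENNReal.ofReal_lt_top (measure_lt_top _ _)⟩
  haveI : IsFiniteMeasure ν₁ := by infer_instance
  have hcdf : ∀ v, ν₁ (Iic v) ≤ μm (Iic v) := by
    intro v
    rw [hν₁, Measure.add_apply, Measure.smul_apply, Measure.smul_apply, smul_eq_mul, smul_eq_mul,
      psi_measure_Iic hC hx₁, psi_measure_Iic hC hx₂, psi_measure_Iic hC hm,
      ← ENNReal.ofReal_mul ha, ← ENNReal.ofReal_mul hb,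
      ← ENNReal.ofReal_add (mul_nonneg ha (psi_nonneg hC hx₁ v))
        (mul_nonneg hb (psi_nonneg hC hx₂ v))]
    refine ENNReal.ofReal_le_ofReal ?_
    have := (hSI (cl v) (cl_mem v)).2 hx₁ hx₂ ha hb hab
    simpa [smul_eq_mul] using this
  have hmass : ν₁ univ = μm univ := by
    rw [hν₁, Measure.add_apply, Measure.smul_apply, Measure.smul_apply, smul_eq_mul, smul_eq_mul,
      psi_measure_univ hC hx₁, psi_measure_univ hC hx₂, psi_measure_univ hC hm,
      ← ENNReal.ofReal_mul ha, ← ENNReal.ofReal_mul hb,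
      ← ENNReal.ofReal_add (mul_nonneg ha hx₁.1) (mul_nonneg hb hx₂.1)]
  have hsd := stochastic_dominance ν₁ μm hcdf hmass hg hbd
  have hsplit : ∫ x, g x ∂ν₁ = a * ∫ x, g x ∂μ₁ + b * ∫ x, g x ∂μ₂ := by
    rw [hν₁, integral_add_measure
      (integrable_of_antitone_bounded hg hbd) (integrable_of_antitone_bounded hg hbd),
      integral_smul_measure, integral_smul_measure, ENNReal.toReal_ofReal ha,
      ENNReal.toReal_ofReal hb, smul_eq_mul, smul_eq_mul]
  rw [hsplit] at hsd
  simpa [smul_eq_mul] using hsd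

lemma J_lipschitz {x₁ x₂ : ℝ} (hx₁ : x₁ ∈ Icc (0:ℝ) 1)
    (hx₂ : x₂ ∈ Icc (0:ℝ) 1) (h12 : x₁ ≤ x₂)
    {g : ℝ → ℝ} (hg : Antitone g) {lo hi : ℝ} (hbd : ∀ w, g w ∈ Icc lo hi) :
    |(∫ w in (0:ℝ)..1, deriv (fun w => C x₂ (cl w)) w * g w)
      - ∫ w in (0:ℝ)..1, deriv (fun w => C x₁ (cl w)) w * g w|
      ≤ max |lo| |hi| * (x₂ - x₁) := by
  rw [J_repr hC hx₁ hg hbd, J_repr hC hx₂ hg hbd]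
  set μ₁ := (psi_mono hC hx₁).stieltjesFunction.measure
  set μ₂ := (psi_mono hC hx₂).stieltjesFunction.measure
  haveI := psi_measure_finite hC hx₁
  haveI := psi_measure_finite hC hx₂
  set Δm := psi_diff_mono hC hx₁ hx₂ h12
  set σ := Δm.stieltjesFunction.measure with hσ
  have hΔc : Continuous (fun w => C x₂ (cl w) - C x₁ (cl w)) :=
    (psi_lipschitz hC hx₂).continuous.sub (psi_lipschitz hC hx₁).continuous
  have hσuniv : σ univ = ENNReal.ofReal (x₂ - x₁) := by
    rw [hσ, StieltjesFunction.measure_univ _ (l := 0) (u := x₂ - x₁) ?_ ?_, sub_zero]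
    · rw [funext (stieltjes_apply Δm hΔc)]
      refine Tendsto.congr' ?_ tendsto_const_nhds
      filter_upwards [eventually_le_atBot (0:ℝ)] with w hw
      rw [psi_of_nonpos hC hx₁ hw, psi_of_nonpos hC hx₂ hw, sub_zero]
    · rw [funext (stieltjes_apply Δm hΔc)]
      refine Tendsto.congr' ?_ tendsto_const_nhds
      filter_upwards [eventually_ge_atTop (1:ℝ)] with w hw
      rw [psi_of_one_le hC hx₁ hw, psi_of_one_le hC hx₂ hw]
  haveI hσfin : IsFiniteMeasure σ := ⟨by rw [hσuniv]; exact ENNReal.ofReal_lt_top⟩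
  have hadd : μ₂ = μ₁ + σ := by
    refine Measure.ext_of_Ioc' _ _ (fun a b hab => ?_) (fun a b hab => ?_)
    · rw [stieltjes_measure_Ioc _ (psi_lipschitz hC hx₂).continuous]
      exact ENNReal.ofReal_ne_top
    · rw [Measure.add_apply, stieltjes_measure_Ioc _ (psi_lipschitz hC hx₂).continuous,
        stieltjes_measure_Ioc _ (psi_lipschitz hC hx₁).continuous,
        stieltjes_measure_Ioc _ hΔc,
        ← ENNReal.ofReal_add (sub_nonneg.2 (psi_mono hC hx₁ hab.le))
          (sub_nonneg.2 (Δm hab.le))]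
      congr 1
      ring
  have hgB : ∀ w, ‖g w‖ ≤ max |lo| |hi| := by
    intro w
    rw [Real.norm_eq_abs, abs_le]
    refine ⟨?_, ?_⟩
    · have h1 := (hbd w).1
      have h2 := neg_abs_le lo
      have h3 := le_max_left |lo| |hi|
      linarith
    · have h1 := (hbd w).2
      have h2 := le_abs_self hi
      have h3 := le_max_right |lo| |hi|
      linarith
  have hint : ∫ w, g w ∂μ₂ = ∫ w, g w ∂μ₁ + ∫ w, g w ∂σ := by
    rw [hadd, integral_add_measure (integrable_of_antitone_bounded hg hbd)
      (integrable_of_antitone_bounded hg hbd)]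
  rw [hint, add_sub_cancel_left]
  calc |∫ w, g w ∂σ| ≤ max |lo| |hi| * (σ univ).toReal :=
        norm_integral_le_of_norm_le_const (ae_of_all _ hgB)
    _ = max |lo| |hi| * (x₂ - x₁) := by
        rw [hσuniv, ENNReal.toReal_ofReal (sub_nonneg.2 h12)]

end JProps

/-! ### The derivative of a concave Lipschitz function agrees a.e. with an antitone function -/

lemma slope_anti_right {J : ℝ → ℝ} (hJ : ConcaveOn ℝ (Icc (0:ℝ) 1) J) {u b b' : ℝ}
    (hu : u ∈ Icc (0:ℝ) 1) (hb' : b' ∈ Icc (0:ℝ) 1) (hub : u < b) (hbb' : b ≤ b') :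
    (J b' - J u)/(b' - u) ≤ (J b - J u)/(b - u) := by
  rcases eq_or_lt_of_le hbb' with rfl | hlt
  · exact le_rfl
  · have hadj := hJ.slope_anti_adjacent hu hb' hub hlt
    have h1 : 0 < b - u := sub_pos.2 hub
    have h2 : 0 < b' - b := sub_pos.2 hlt
    have h3 : 0 < b' - u := by linarith
    rw [div_le_div_iff₀ h3 h1]
    rw [div_le_div_iff₀ h2 h1] at hadj
    nlinarith

lemma concave_deriv_ae {J : ℝ → ℝ} (hJ : ConcaveOn ℝ (Icc (0:ℝ) 1) J) {B : ℝ}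
    (hL : ∀ x₁ ∈ Icc (0:ℝ) 1, ∀ x₂ ∈ Icc (0:ℝ) 1, |J x₂ - J x₁| ≤ B * |x₂ - x₁|) :
    ∃ h : ℝ → ℝ, AntitoneOn h (Icc (0:ℝ) 1) ∧
      ∀ᵐ u ∂(volume.restrict (Icc (0:ℝ) 1)), deriv J u = h u := by
  have hslope_bd : ∀ u ∈ Icc (0:ℝ) 1, ∀ b ∈ Icc (0:ℝ) 1, u ≠ b →
      |(J b - J u)/(b - u)| ≤ B := by
    intro u hu b hb hub
    rw [abs_div, div_le_iff₀ (abs_pos.2 (sub_ne_zero.2 (fun hh => hub hh.symm)))]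
    exact hL u hu b hb
  set S : ℝ → Set ℝ := fun u => (fun b => (J b - J u)/(b - u)) '' Ioc u 1 with hSdef
  set T : Set ℝ := (fun a => (J 1 - J a)/(1 - a)) '' Ico 0 1 with hTdef
  have hSne : ∀ {u : ℝ}, u < 1 → (S u).Nonempty := fun {u} hu =>
    ⟨_, mem_image_of_mem _ (show (1:ℝ) ∈ Ioc u 1 from ⟨hu, le_rfl⟩)⟩
  have hSbdd : ∀ {u : ℝ}, u ∈ Icc (0:ℝ) 1 → BddAbove (S u) := by
    rintro u hu
    refine ⟨B, ?_⟩
    rintro y ⟨b, hb, rfl⟩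
    have hbIcc : b ∈ Icc (0:ℝ) 1 := ⟨le_trans hu.1 hb.1.le, hb.2⟩
    exact le_trans (le_abs_self _) (hslope_bd u hu b hbIcc (ne_of_lt hb.1))
  have hTne : T.Nonempty := ⟨_, mem_image_of_mem _ (show (0:ℝ) ∈ Ico (0:ℝ) 1 from ⟨le_rfl, one_pos⟩)⟩
  have hTbdd : BddBelow T := by
    refine ⟨-B, ?_⟩
    rintro y ⟨a, ha, rfl⟩
    have haIcc : a ∈ Icc (0:ℝ) 1 := ⟨ha.1, ha.2.le⟩
    have := hslope_bd a haIcc 1 (right_mem_Icc.2 zero_le_one) (ne_of_lt ha.2)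
    linarith [(abs_le.1 this).1]
  set h : ℝ → ℝ := fun u => if u < 1 then sSup (S u) else sInf T with hhdef
  have hmemS : ∀ {u b : ℝ}, b ∈ Ioc u 1 → (J b - J u)/(b - u) ∈ S u :=
    fun {u b} hb => mem_image_of_mem _ hb
  refine ⟨h, ?_, ?_⟩
  · -- antitone
    intro u hu u' hu' huu'
    rcases eq_or_lt_of_le huu' with rfl | hlt
    · exact le_rfl
    rcases lt_or_eq_of_le hu'.2 with hu'1 | hu'1
    · -- u' < 1
      have hu1 : u < 1 := lt_trans hlt hu'1
      rw [hhdef]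
      simp only [if_pos hu1, if_pos hu'1]
      refine csSup_le (hSne hu'1) ?_
      rintro y ⟨b, hb, rfl⟩
      have hbIcc : b ∈ Icc (0:ℝ) 1 := ⟨le_trans hu'.1 hb.1.le, hb.2⟩
      have step1 : (J b - J u')/(b - u') ≤ (J u' - J u)/(u' - u) :=
        hJ.slope_anti_adjacent hu hbIcc hlt hb.1
      refine le_trans step1 (le_csSup (hSbdd hu) (hmemS ⟨hlt, hu'.2⟩))
    · -- u' = 1
      subst hu'1
      rw [hhdef]
      simp only [if_pos hlt, if_neg (lt_irrefl (1:ℝ))]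
      calc sInf T ≤ (J 1 - J u)/(1 - u) :=
            csInf_le hTbdd (mem_image_of_mem _ (show u ∈ Ico (0:ℝ) 1 from ⟨hu.1, hlt⟩))
        _ ≤ sSup (S u) := le_csSup (hSbdd hu) (hmemS ⟨hlt, le_rfl⟩)
  · -- a.e. equality
    have hM : Monotone (fun x => J (cl x) + B * cl x) := by
      intro x y hxy
      have hcl : cl x ≤ cl y := cl_mono hxy
      have := hL (cl x) (cl_mem x) (cl y) (cl_mem y)
      rw [abs_of_nonneg (sub_nonneg.2 hcl)] at this
      have h1 := (abs_le.1 this).1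
      simp only []
      linarith
    have hMd := hM.ae_differentiableAt
    have hboundary : ∀ᵐ u ∂(volume : Measure ℝ), u ∈ Icc (0:ℝ) 1 → u ≠ 0 ∧ u ≠ 1 := by
      have h0 : (volume : Measure ℝ) ({0, 1} : Set ℝ) = 0 :=
        Set.Finite.measure_zero (by simp) volume
      filter_upwards [measure_eq_zero_iff_ae_notMem.1 h0] with u hu _
      refine ⟨fun hc => hu ?_, fun hc => hu ?_⟩
      · rw [hc]; exact Or.inl rfl
      · rw [hc]; exact Or.inr rfl
    rw [ae_restrict_iff' measurableSet_Icc]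
    filter_upwards [hMd, hboundary] with u hMdu hbu huIcc
    have huIoo : u ∈ Ioo (0:ℝ) 1 := ⟨lt_of_le_of_ne huIcc.1 (Ne.symm (hbu huIcc).1),
      lt_of_le_of_ne huIcc.2 (hbu huIcc).2⟩
    -- J is differentiable at u
    have hEq : (fun x => (J (cl x) + B * cl x) - B * x) =ᶠ[nhds u] J := by
      filter_upwards [cl_eventuallyEq_id huIoo] with x hx
      rw [hx]; ring
    have hJd : HasDerivAt J (deriv (fun x => J (cl x) + B * cl x) u - B) u := by
      have h1 : HasDerivAt (fun x => J (cl x) + B * cl x)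
          (deriv (fun x => J (cl x) + B * cl x) u) u := hMdu.hasDerivAt
      have h2 : HasDerivAt (fun x => B * x) B u := by
        simpa using (hasDerivAt_id u).const_mul B
      exact (h1.sub h2).congr_of_eventuallyEq hEq.symm
    set d := deriv (fun x => J (cl x) + B * cl x) u - B with hd
    have hTd : Tendsto (fun b => (J b - J u)/(b - u)) (nhdsWithin u (Ioi u)) (nhds d) := by
      have := (hasDerivAt_iff_tendsto_slope.1 hJd).mono_left
        (nhdsWithin_mono u (fun y (hy : u < y) =>
          Set.mem_compl_singleton_iff.2 (ne_of_gt hy)))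
      refine this.congr (fun b => ?_)
      rw [slope_def_field]
    have hub : ∀ y ∈ S u, y ≤ d := by
      rintro y ⟨b, hb, rfl⟩
      refine ge_of_tendsto hTd ?_
      filter_upwards [Ioo_mem_nhdsGT_of_mem (show u ∈ Ico u b from ⟨le_rfl, hb.1⟩)] with b' hb'
      have hbIcc : b ∈ Icc (0:ℝ) 1 := ⟨le_trans huIcc.1 hb.1.le, hb.2⟩
      exact slope_anti_right hJ huIcc hbIcc hb'.1 hb'.2.le
    have hled : d ≤ sSup (S u) := by
      refine le_of_tendsto hTd ?_
      filter_upwards [Ioc_mem_nhdsGT_of_mem (show u ∈ Ico u 1 from ⟨le_rfl, huIoo.2⟩)] with b hb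
      exact le_csSup (hSbdd huIcc) (hmemS hb)
    rw [hJd.deriv, hhdef]
    simp only [if_pos huIoo.2]
    exact le_antisymm hled (csSup_le (hSne huIoo.2) hub)

/-! ### Master lemma: the concave case -/

lemma ae_mem_Ioo : ∀ᵐ u ∂(volume.restrict (Icc (0:ℝ) 1)), u ∈ Ioo (0:ℝ) 1 := by
  rw [ae_restrict_iff' measurableSet_Icc]
  have h0 : (volume : Measure ℝ) ({0, 1} : Set ℝ) = 0 :=
    Set.Finite.measure_zero (by simp) volume
  filter_upwards [measure_eq_zero_iff_ae_notMem.1 h0] with u hu huIcc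
  refine ⟨lt_of_le_of_ne huIcc.1 (fun hc => hu (by rw [← hc]; exact Or.inl rfl)), 
    lt_of_le_of_ne huIcc.2 (fun hc => hu (by rw [hc]; exact Or.inr rfl))⟩

lemma ae_ne_one : ∀ᵐ w : ℝ ∂volume, w ≠ 1 := by
  filter_upwards [measure_eq_zero_iff_ae_notMem.1 (Real.volume_singleton (a := 1))] with w hw
  simpa using hw

lemma intervalIntegrable_of_bounded {F : ℝ → ℝ} (hm : Measurable F) {c : ℝ}
    (hb : ∀ w, |F w| ≤ c) (a b : ℝ) : IntervalIntegrable F volume a b := by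
  constructor <;>
  · haveI : IsFiniteMeasure (volume.restrict (Ioc (min a b) (max a b))) := by
      constructor
      rw [Measure.restrict_apply_univ, Real.volume_Ioc]
      exact ENNReal.ofReal_lt_top
    refine Integrable.mono' (g := fun _ => c) ?_ hm.aestronglyMeasurable.restrict
      (ae_of_all _ fun w => by rw [Real.norm_eq_abs]; exact hb w)
    · refine integrableOn_const (lt_top_iff_ne_top.1 ?_)
      rw [Real.volume_Ioc]
      exact ENNReal.ofReal_lt_top

section Master

variable {C : ℝ → ℝ → ℝ} (hC : IsCopula C)
include hC

lemma master :
    (∀ v ∈ Icc (0:ℝ) 1, ConcaveOn ℝ (Icc (0:ℝ) 1) (fun u => C u v)) ↔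
      ∀ f : ℝ → ℝ, IntegrableOn f (Icc (0:ℝ) 1) →
        (∃ g : ℝ → ℝ, AntitoneOn g (Icc (0:ℝ) 1) ∧
          f =ᵐ[volume.restrict (Icc (0:ℝ) 1)] g) →
        ∃ h : ℝ → ℝ, AntitoneOn h (Icc (0:ℝ) 1) ∧
          deriv (fun x => ∫ w in (0:ℝ)..1, deriv (fun w' => C x w') w * f w)
            =ᵐ[volume.restrict (Icc (0:ℝ) 1)] h := by
  constructor
  · rintro hSI f hfint ⟨g, hganti, hfg⟩
    set g' : ℝ → ℝ := fun x => g (cl x) with hg'def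
    have hg' : Antitone g' := fun x y hxy => hganti (cl_mem x) (cl_mem y) (cl_mono hxy)
    have hbd : ∀ w, g' w ∈ Icc (g 1) (g 0) := fun w =>
      ⟨hganti (cl_mem w) (right_mem_Icc.2 zero_le_one) (cl_mem w).2,
       hganti (left_mem_Icc.2 zero_le_one) (cl_mem w) (cl_mem w).1⟩
    have hfg' : ∀ᵐ w ∂(volume : Measure ℝ), w ∈ Icc (0:ℝ) 1 → f w = g w :=
      (ae_restrict_iff' measurableSet_Icc).1 hfg
    have hIJ : ∀ x ∈ Icc (0:ℝ) 1,
        (∫ w in (0:ℝ)..1, deriv (fun w' => C x w') w * f w)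
          = ∫ w in (0:ℝ)..1, deriv (fun w' => C x (cl w')) w * g' w := by
      intro x hx
      refine intervalIntegral.integral_congr_ae ?_
      filter_upwards [hfg', ae_ne_one] with w hw h1 hmem
      rw [uIoc_of_le (zero_le_one)] at hmem
      have hIoo : w ∈ Ioo (0:ℝ) 1 := ⟨hmem.1, lt_of_le_of_ne hmem.2 h1⟩
      have hev : (fun w' => C x (cl w')) =ᶠ[nhds w] (fun w' => C x w') := by
        filter_upwards [cl_eventuallyEq_id hIoo] with t ht
        rw [ht]
      have hgw : g' w = g w := by
        show g (cl w) = g w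
        rw [cl_eq ⟨hmem.1.le, hmem.2⟩]
      rw [← hev.deriv_eq, hw ⟨hmem.1.le, hmem.2⟩, hgw]
    have hJconc := J_concave hC hSI hg' hbd
    set B := max |g 1| |g 0| with hB
    have hJlip : ∀ x₁ ∈ Icc (0:ℝ) 1, ∀ x₂ ∈ Icc (0:ℝ) 1,
        |(∫ w in (0:ℝ)..1, deriv (fun w' => C x₂ (cl w')) w * g' w)
          - ∫ w in (0:ℝ)..1, deriv (fun w' => C x₁ (cl w')) w * g' w| ≤ B * |x₂ - x₁| := by
      intro x₁ hx₁ x₂ hx₂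
      rcases le_total x₁ x₂ with h12 | h12
      · rw [abs_of_nonneg (sub_nonneg.2 h12)]
        exact J_lipschitz hC hx₁ hx₂ h12 hg' hbd
      · rw [abs_sub_comm x₂ x₁, abs_of_nonneg (sub_nonneg.2 h12), abs_sub_comm]
        exact J_lipschitz hC hx₂ hx₁ h12 hg' hbd
    obtain ⟨h, hanti, hae⟩ := concave_deriv_ae hJconc hJlip
    refine ⟨h, hanti, ?_⟩
    filter_upwards [hae, ae_mem_Ioo] with u h1 h2
    rw [← h1]
    refine EventuallyEq.deriv_eq ?_
    filter_upwards [Ioo_mem_nhds h2.1 h2.2] with x hx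
    exact hIJ x ⟨hx.1.le, hx.2.le⟩
  · intro hT v hv
    classical
    set f : ℝ → ℝ := fun w => if w ≤ v then (1:ℝ) else 0 with hfdef
    have hfanti : Antitone f := by
      intro w₁ w₂ h12
      by_cases h2 : w₂ ≤ v
      · simp [hfdef, h2, le_trans h12 h2]
      · simp only [hfdef, if_neg h2]
        by_cases h1 : w₁ ≤ v <;> simp [h1]
    have hfmeas : Measurable f := hfanti.measurable
    have hfbd : ∀ w, |f w| ≤ 1 := by
      intro w
      by_cases hw : w ≤ v <;> simp [hfdef, hw]
    have hfint : IntegrableOn f (Icc (0:ℝ) 1) := by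
      haveI : IsFiniteMeasure (volume.restrict (Icc (0:ℝ) 1)) := by
        constructor
        rw [Measure.restrict_apply_univ, Real.volume_Icc]
        exact ENNReal.ofReal_lt_top
      exact ⟨hfmeas.aestronglyMeasurable.restrict,
        HasFiniteIntegral.of_bounded (C := 1) (ae_of_all _ fun w => by
          rw [Real.norm_eq_abs]; exact hfbd w)⟩
    obtain ⟨h, hanti, hae⟩ := hT f hfint ⟨f, hfanti.antitoneOn _, EventuallyEq.rfl⟩
    have hinner : ∀ x ∈ Icc (0:ℝ) 1,
        (∫ w in (0:ℝ)..1, deriv (fun w' => C x w') w * f w) = C x v := by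
      intro x hx
      have hψbd : ∀ w, |deriv (fun w' => C x (cl w')) w| ≤ 1 := by
        intro w
        have := deriv_le_of_lipschitz (psi_lipschitz hC hx) w
        simpa using this
      have hψint : ∀ a b : ℝ,
          IntervalIntegrable (fun w => deriv (fun w' => C x (cl w')) w * f w) volume a b := by
        intro a b
        refine intervalIntegrable_of_bounded ((measurable_deriv _).mul hfmeas)
          (c := 1) (fun w => ?_) a b
        rw [Pi.mul_apply, abs_mul]
        calc |deriv (fun w' => C x (cl w')) w| * |f w| ≤ 1 * 1 :=
              mul_le_mul (hψbd w) (hfbd w) (abs_nonneg _) zero_le_one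
          _ = 1 := one_mul 1
      have step0 : (∫ w in (0:ℝ)..1, deriv (fun w' => C x w') w * f w)
          = ∫ w in (0:ℝ)..1, deriv (fun w' => C x (cl w')) w * f w := by
        refine intervalIntegral.integral_congr_ae ?_
        filter_upwards [ae_ne_one] with w h1 hmem
        rw [uIoc_of_le (zero_le_one)] at hmem
        have hIoo : w ∈ Ioo (0:ℝ) 1 := ⟨hmem.1, lt_of_le_of_ne hmem.2 h1⟩
        have hev : (fun w' => C x (cl w')) =ᶠ[nhds w] (fun w' => C x w') := by
          filter_upwards [cl_eventuallyEq_id hIoo] with t ht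
          rw [ht]
        rw [← hev.deriv_eq]
      rw [step0, ← intervalIntegral.integral_add_adjacent_intervals (hψint 0 v) (hψint v 1)]
      have hpart1 : (∫ w in (0:ℝ)..v, deriv (fun w' => C x (cl w')) w * f w)
          = ∫ w in (0:ℝ)..v, deriv (fun w' => C x (cl w')) w := by
        refine intervalIntegral.integral_congr (fun w hw => ?_)
        rw [uIcc_of_le hv.1] at hw
        simp [hfdef, hw.2]
      have hpart2 : (∫ w in v..1, deriv (fun w' => C x (cl w')) w * f w) = 0 := by
        have hz : ∀ᵐ w ∂(volume : Measure ℝ), w ∈ Set.uIoc v 1 →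
            deriv (fun w' => C x (cl w')) w * f w = 0 := by
          refine ae_of_all _ (fun w hw => ?_)
          rw [uIoc_of_le hv.2] at hw
          simp [hfdef, not_le.2 hw.1]
        rw [intervalIntegral.integral_congr_ae hz, intervalIntegral.integral_zero]
      rw [hpart1, hpart2, add_zero,
        ftc_monotone_lipschitz (psi_mono hC hx) (psi_lipschitz hC hx) hv.1]
      show C x (cl v) - C x (cl 0) = C x v
      rw [cl_eq hv, cl_zero, (hC.1 x hx).1, sub_zero]
    have hΦae : ∀ᵐ u ∂(volume.restrict (Icc (0:ℝ) 1)),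
        deriv (fun x => C (cl x) v) u = h u := by
      filter_upwards [hae, ae_mem_Ioo] with u h1 h2
      rw [← h1]
      refine EventuallyEq.deriv_eq ?_
      filter_upwards [Ioo_mem_nhds h2.1 h2.2] with x hx
      rw [hinner x ⟨hx.1.le, hx.2.le⟩, cl_eq ⟨hx.1.le, hx.2.le⟩]
    have hkey : ∀ a ∈ Icc (0:ℝ) 1, ∀ b ∈ Icc (0:ℝ) 1, a ≤ b →
        C b v - C a v = ∫ w in a..b, h w := by
      intro a ha b hb hab
      have h1 : C b v - C a v = ∫ w in a..b, deriv (fun x => C (cl x) v) w := by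
        rw [ftc_monotone_lipschitz (phi_mono hC hv) (phi_lipschitz hC hv) hab]
        show C b v - C a v = C (cl b) v - C (cl a) v
        rw [cl_eq ha, cl_eq hb]
      rw [h1]
      refine intervalIntegral.integral_congr_ae ?_
      filter_upwards [(ae_restrict_iff' measurableSet_Icc).1 hΦae] with w hw hmem
      rw [uIoc_of_le hab] at hmem
      exact hw ⟨le_trans ha.1 hmem.1.le, le_trans hmem.2 hb.2⟩
    refine concaveOn_of_slope_anti_adjacent (convex_Icc 0 1) (fun {x y z} hx hz hxy hyz => ?_)
    have hyIcc : y ∈ Icc (0:ℝ) 1 := ⟨le_trans hx.1 hxy.le, le_trans hyz.le hz.2⟩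
    have hint : ∀ a b : ℝ, a ∈ Icc (0:ℝ) 1 → b ∈ Icc (0:ℝ) 1 →
        IntervalIntegrable h volume a b := fun a b ha hb =>
      AntitoneOn.intervalIntegrable (hanti.mono (uIcc_subset_Icc ha hb))
    have e1 := hkey x hx y hyIcc hxy.le
    have e2 := hkey y hyIcc z hz hyz.le
    have i1 : h y * (y - x) ≤ ∫ w in x..y, h w := by
      have := intervalIntegral.integral_mono_on hxy.le intervalIntegrable_const
        (hint x y hx hyIcc)
        (fun w hw => hanti ⟨le_trans hx.1 hw.1, le_trans hw.2 hyIcc.2⟩ hyIcc hw.2)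
      simpa [mul_comm] using this
    have i2 : ∫ w in y..z, h w ≤ h y * (z - y) := by
      have := intervalIntegral.integral_mono_on hyz.le (hint y z hyIcc hz)
        intervalIntegrable_const
        (fun w hw => hanti hyIcc ⟨le_trans hyIcc.1 hw.1, le_trans hw.2 hz.2⟩ hw.1)
      simpa [mul_comm] using this
    rw [e1, e2, div_le_div_iff₀ (sub_pos.2 hyz) (sub_pos.2 hxy)]
    nlinarith [mul_le_mul_of_nonneg_right i2 (sub_pos.2 hxy).le,
      mul_le_mul_of_nonneg_right i1 (sub_pos.2 hyz).le]

end Master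

/-! ### Reflection: reducing the convex case to the concave case -/

section Reflection

variable {C : ℝ → ℝ → ℝ}

lemma refl_isCopula (hC : IsCopula C) : IsCopula (fun u v => v - C (1 - u) v) := by
  obtain ⟨hu, hv, hrect⟩ := hC
  refine ⟨?_, ?_, ?_⟩
  · intro u huI
    have h1u : (1:ℝ) - u ∈ Icc (0:ℝ) 1 := ⟨by linarith [huI.2], by linarith [huI.1]⟩
    constructor
    · show (0:ℝ) - C (1 - u) 0 = 0
      rw [(hu _ h1u).1]; ring
    · show (1:ℝ) - C (1 - u) 1 = u
      rw [(hu _ h1u).2]; ring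
  · intro v hvI
    constructor
    · show v - C (1 - 0) v = 0
      rw [show (1:ℝ) - 0 = 1 by ring, (hv v hvI).2]; ring
    · show v - C (1 - 1) v = v
      rw [show (1:ℝ) - 1 = 0 by ring, (hv v hvI).1]; ring
  · intro u₁ u₂ v₁ v₂ h1 h2 h3 h4 h12 h34
    have g1 : (1:ℝ) - u₂ ∈ Icc (0:ℝ) 1 := ⟨by linarith [h2.2], by linarith [h2.1]⟩
    have g2 : (1:ℝ) - u₁ ∈ Icc (0:ℝ) 1 := ⟨by linarith [h1.2], by linarith [h1.1]⟩
    have := hrect (1 - u₂) (1 - u₁) v₁ v₂ g1 g2 h3 h4 (by linarith) h34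
    simp only []
    linarith

lemma refl_stoch (hC : IsCopula C) :
    (∀ v ∈ Icc (0:ℝ) 1, ConcaveOn ℝ (Icc (0:ℝ) 1)
        (fun u => (fun u' v' => v' - C (1 - u') v') u v)) ↔
      (∀ v ∈ Icc (0:ℝ) 1, ConvexOn ℝ (Icc (0:ℝ) 1) (fun u => C u v)) := by
  constructor
  · intro hcc v hv
    refine ⟨convex_Icc 0 1, fun x hx y hy a b ha hb hab => ?_⟩
    have hx' : (1:ℝ) - x ∈ Icc (0:ℝ) 1 := ⟨by linarith [hx.2], by linarith [hx.1]⟩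
    have hy' : (1:ℝ) - y ∈ Icc (0:ℝ) 1 := ⟨by linarith [hy.2], by linarith [hy.1]⟩
    have h := (hcc v hv).2 hx' hy' ha hb hab
    simp only [smul_eq_mul, sub_sub_cancel] at h ⊢
    have he : a * (1 - x) + b * (1 - y) = 1 - (a * x + b * y) := by
      rw [mul_sub, mul_sub]; linarith
    rw [he, sub_sub_cancel] at h
    have hv' : a * v + b * v = v := by rw [← add_mul, hab, one_mul]
    linarith
  · intro hcx v hv
    refine ⟨convex_Icc 0 1, fun x hx y hy a b ha hb hab => ?_⟩
    have hx' : (1:ℝ) - x ∈ Icc (0:ℝ) 1 := ⟨by linarith [hx.2], by linarith [hx.1]⟩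
    have hy' : (1:ℝ) - y ∈ Icc (0:ℝ) 1 := ⟨by linarith [hy.2], by linarith [hy.1]⟩
    have h := (hcx v hv).2 hx' hy' ha hb hab
    simp only [smul_eq_mul] at h ⊢
    have he : a * (1 - x) + b * (1 - y) = 1 - (a * x + b * y) := by
      rw [mul_sub, mul_sub]; linarith
    rw [he] at h
    have hv' : a * v + b * v = v := by rw [← add_mul, hab, one_mul]
    linarith

lemma refl_inner (hC : IsCopula C) {f : ℝ → ℝ} (hfi : IntervalIntegrable f volume 0 1)
    {x : ℝ} (hx : x ∈ Icc (0:ℝ) 1) :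
    (∫ w in (0:ℝ)..1, deriv (fun w' => w' - C (1 - x) w') w * f w)
      = (∫ w in (0:ℝ)..1, f w)
        - ∫ w in (0:ℝ)..1, deriv (fun w' => C (1 - x) w') w * f w := by
  have hx' : (1:ℝ) - x ∈ Icc (0:ℝ) 1 := ⟨by linarith [hx.2], by linarith [hx.1]⟩
  have hψbd : ∀ w, |deriv (fun w' => C (1-x) (cl w')) w| ≤ 1 := fun w => by
    simpa using deriv_le_of_lipschitz (psi_lipschitz hC hx') w
  have hψf_int : IntervalIntegrable
      (fun w => deriv (fun w' => C (1-x) (cl w')) w * f w) volume 0 1 := by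
    rw [intervalIntegrable_iff]
    exact Integrable.bdd_mul (intervalIntegrable_iff.1 hfi)
      (measurable_deriv _).aestronglyMeasurable.restrict
      (ae_of_all _ fun w => by rw [Real.norm_eq_abs]; exact hψbd w)
  have hdiffae : ∀ᵐ w ∂(volume : Measure ℝ),
      DifferentiableAt ℝ (fun w' => C (1-x) (cl w')) w :=
    (psi_mono hC hx').ae_differentiableAt
  have step1 : (∫ w in (0:ℝ)..1, deriv (fun w' => w' - C (1 - x) w') w * f w)
      = ∫ w in (0:ℝ)..1, (f w - deriv (fun w' => C (1-x) (cl w')) w * f w) := by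
    refine intervalIntegral.integral_congr_ae ?_
    filter_upwards [ae_ne_one, hdiffae] with w h1 hdw hmem
    rw [uIoc_of_le (zero_le_one)] at hmem
    have hIoo : w ∈ Ioo (0:ℝ) 1 := ⟨hmem.1, lt_of_le_of_ne hmem.2 h1⟩
    have hev : (fun w' => C (1-x) (cl w')) =ᶠ[nhds w] (fun w' => C (1-x) w') := by
      filter_upwards [cl_eventuallyEq_id hIoo] with t ht
      rw [ht]
    have hD : HasDerivAt (fun w' => C (1-x) w') (deriv (fun w' => C (1-x) (cl w')) w) w :=
      hdw.hasDerivAt.congr_of_eventuallyEq hev.symm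
    have hDiff : HasDerivAt (fun w' => w' - C (1 - x) w')
        (1 - deriv (fun w' => C (1-x) (cl w')) w) w := (hasDerivAt_id w).sub hD
    rw [hDiff.deriv]
    ring
  have step2 : (∫ w in (0:ℝ)..1, deriv (fun w' => C (1-x) w') w * f w)
      = ∫ w in (0:ℝ)..1, deriv (fun w' => C (1-x) (cl w')) w * f w := by
    refine intervalIntegral.integral_congr_ae ?_
    filter_upwards [ae_ne_one] with w h1 hmem
    rw [uIoc_of_le (zero_le_one)] at hmem
    have hIoo : w ∈ Ioo (0:ℝ) 1 := ⟨hmem.1, lt_of_le_of_ne hmem.2 h1⟩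
    have hev : (fun w' => C (1-x) (cl w')) =ᶠ[nhds w] (fun w' => C (1-x) w') := by
      filter_upwards [cl_eventuallyEq_id hIoo] with t ht
      rw [ht]
    rw [← hev.deriv_eq]
  rw [step1, step2, intervalIntegral.integral_sub hfi hψf_int]

lemma reflect_markov (hC : IsCopula C) {f : ℝ → ℝ} (hfi : IntervalIntegrable f volume 0 1)
    {z : ℝ} (hz : z ∈ Ioo (0:ℝ) 1) :
    deriv (fun x => ∫ w in (0:ℝ)..1, deriv (fun w' => w' - C (1 - x) w') w * f w) z
      = deriv (fun x => ∫ w in (0:ℝ)..1, deriv (fun w' => C x w') w * f w) (1 - z) := by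
  set K := ∫ w in (0:ℝ)..1, f w with hK
  set I : ℝ → ℝ := fun x => ∫ w in (0:ℝ)..1, deriv (fun w' => C x w') w * f w with hI
  have hev : (fun x => ∫ w in (0:ℝ)..1, deriv (fun w' => w' - C (1 - x) w') w * f w)
      =ᶠ[nhds z] (fun x => K - I (1 - x)) := by
    filter_upwards [Ioo_mem_nhds hz.1 hz.2] with x hx
    exact refl_inner hC hfi ⟨hx.1.le, hx.2.le⟩
  rw [hev.deriv_eq, deriv_const_sub, deriv_comp_const_sub, neg_neg]

lemma reflect_ae {p : ℝ → Prop}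
    (hp : ∀ᵐ z ∂(volume.restrict (Icc (0:ℝ) 1)), p z) :
    ∀ᵐ u ∂(volume.restrict (Icc (0:ℝ) 1)), p (1 - u) := by
  have hmp : MeasurePreserving (fun u : ℝ => 1 - u) volume volume := by
    have hcomp := (measurePreserving_add_left (volume : Measure ℝ) 1).comp
      (Measure.measurePreserving_neg (volume : Measure ℝ))
    have heq : ((fun x : ℝ => 1 + x) ∘ Neg.neg) = (fun u : ℝ => 1 - u) := by
      funext u
      simp [sub_eq_add_neg]
    rwa [heq] at hcomp
  have hpre : (fun u : ℝ => 1 - u) ⁻¹' (Icc (0:ℝ) 1) = Icc (0:ℝ) 1 := by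
    ext u
    simp only [mem_preimage, mem_Icc]
    constructor <;> (rintro ⟨h1, h2⟩; constructor <;> linarith)
  have hres := hmp.restrict_preimage (s := Icc (0:ℝ) 1) measurableSet_Icc
  rw [hpre] at hres
  exact hres.quasiMeasurePreserving.ae hp

end Reflection

end CopProof

theorem stochIncr_iff_markovOp_antitone (C : ℝ → ℝ → ℝ) (hC : IsCopula C) :
    (StochIncr C ↔
      ∀ f : ℝ → ℝ, IntegrableOn f (Icc (0:ℝ) 1) →
        (∃ g : ℝ → ℝ, AntitoneOn g (Icc (0:ℝ) 1) ∧
          f =ᵐ[volume.restrict (Icc (0:ℝ) 1)] g) →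
        ∃ h : ℝ → ℝ, AntitoneOn h (Icc (0:ℝ) 1) ∧
          MarkovOp C f =ᵐ[volume.restrict (Icc (0:ℝ) 1)] h) ∧
    (StochDecr C ↔
      ∀ f : ℝ → ℝ, IntegrableOn f (Icc (0:ℝ) 1) →
        (∃ g : ℝ → ℝ, AntitoneOn g (Icc (0:ℝ) 1) ∧
          f =ᵐ[volume.restrict (Icc (0:ℝ) 1)] g) →
        ∃ h : ℝ → ℝ, MonotoneOn h (Icc (0:ℝ) 1) ∧
          MarkovOp C f =ᵐ[volume.restrict (Icc (0:ℝ) 1)] h) := by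
  constructor
  · exact CopProof.master hC
  · have hCr : IsCopula (fun u v => v - C (1 - u) v) := CopProof.refl_isCopula hC
    have h1 := CopProof.master hCr
    have h2 := CopProof.refl_stoch hC
    constructor
    · intro hSD f hfint hex
      have hfi : IntervalIntegrable f volume 0 1 :=
        IntegrableOn.intervalIntegrable (by rw [uIcc_of_le zero_le_one]; exact hfint)
      obtain ⟨h, hanti, hae⟩ := h1.1 (h2.2 hSD) f hfint hex
      refine ⟨fun u => h (1 - u), ?_, ?_⟩
      · intro a ha b hb hab
        exact hanti ⟨by linarith [hb.2], by linarith [hb.1]⟩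
          ⟨by linarith [ha.2], by linarith [ha.1]⟩ (by linarith)
      · have hpull := CopProof.reflect_ae hae
        filter_upwards [hpull, CopProof.ae_mem_Ioo] with u hu h2u
        have hz : (1:ℝ) - u ∈ Ioo (0:ℝ) 1 := ⟨by linarith [h2u.2], by linarith [h2u.1]⟩
        have hrel := CopProof.reflect_markov hC hfi hz
        rw [show (1:ℝ) - (1 - u) = u by ring] at hrel
        show deriv (fun x => ∫ w in (0:ℝ)..1, deriv (fun w' => C x w') w * f w) u
          = h (1 - u)
        rw [← hrel]
        exact hu
    · intro hT
      refine h2.1 (h1.2 ?_)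
      intro f hfint hex
      have hfi : IntervalIntegrable f volume 0 1 :=
        IntegrableOn.intervalIntegrable (by rw [uIcc_of_le zero_le_one]; exact hfint)
      obtain ⟨h, hmono, hae⟩ := hT f hfint hex
      refine ⟨fun z => h (1 - z), ?_, ?_⟩
      · intro a ha b hb hab
        exact hmono ⟨by linarith [hb.2], by linarith [hb.1]⟩
          ⟨by linarith [ha.2], by linarith [ha.1]⟩ (by linarith)
      · have hpull := CopProof.reflect_ae hae
        filter_upwards [hpull, CopProof.ae_mem_Ioo] with z hz h2z
        have hrel := CopProof.reflect_markov hC hfi h2z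
        show deriv (fun x => ∫ w in (0:ℝ)..1,
          deriv (fun w' => w' - C (1 - x) w') w * f w) z = h (1 - z)
        rw [hrel]
        exact hz
end

section
/- The product copula Π(u,v) = uv is the only idempotent 2-copula that is stochastically decreasing in the first component. That is, if C is a 2-copula with C * C = C (Markov product) and u ↦ C(u,v) is convex for each v ∈ [0,1], then C(u,v) = uv. -/
open MeasureTheory Set Filter
open scoped Topology


/-- A monotone function has nonnegative `deriv` everywhere (junk value included). -/
lemma aux_deriv_nonneg_of_monotone {F : ℝ → ℝ} (hm : Monotone F) (x : ℝ) : 0 ≤ deriv F x := by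
  by_cases h : DifferentiableAt ℝ F x
  · have h' := h.hasDerivAt
    rw [hasDerivAt_iff_tendsto_slope] at h'
    refine ge_of_tendsto h' ?_
    filter_upwards [self_mem_nhdsWithin] with y hy
    have hy' : y ≠ x := hy
    rw [slope_def_field]
    rcases lt_or_gt_of_ne hy' with h1 | h1
    · exact div_nonneg_of_nonpos (sub_nonpos.2 (hm h1.le)) (sub_nonpos.2 h1.le)
    · exact div_nonneg (sub_nonneg.2 (hm h1.le)) (sub_nonneg.2 h1.le)
  · rw [deriv_zero_of_not_differentiableAt h]

/-- FTC inequality for continuous monotone functions. -/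
lemma aux_integral_deriv_le_of_monotone {F : ℝ → ℝ} (hm : Monotone F) (hc : Continuous F)
    {a b : ℝ} (hab : a ≤ b) : ∫ t in a..b, deriv F t ≤ F b - F a := by
  set S : StieltjesFunction ℝ := ⟨F, hm, fun x => (hc.continuousAt).continuousWithinAt⟩ with hS
  have hae : ∀ᵐ x, HasDerivAt F (S.measure.rnDeriv volume x).toReal x := S.ae_hasDerivAt
  have hderiv : (deriv F) =ᵐ[volume] fun x => (S.measure.rnDeriv volume x).toReal := by
    filter_upwards [hae] with x hx using hx.deriv
  rw [intervalIntegral.integral_of_le hab]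
  calc ∫ t in Ioc a b, deriv F t
      = ∫ t in Ioc a b, (S.measure.rnDeriv volume t).toReal :=
        integral_congr_ae (ae_restrict_of_ae hderiv)
    _ = (∫⁻ t in Ioc a b, S.measure.rnDeriv volume t).toReal :=
        integral_toReal (S.measure.measurable_rnDeriv volume).aemeasurable
          (ae_restrict_of_ae (Measure.rnDeriv_lt_top _ _))
    _ ≤ (S.measure (Ioc a b)).toReal := by
        refine ENNReal.toReal_mono ?_ (Measure.setLIntegral_rnDeriv_le _)
        rw [S.measure_Ioc]; exact ENNReal.ofReal_ne_top
    _ = F b - F a := by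
        rw [S.measure_Ioc, ENNReal.toReal_ofReal (sub_nonneg.2 (hm hab))]

noncomputable def auxClamp (t : ℝ) : ℝ := max 0 (min 1 t)

lemma auxClamp_mono : Monotone auxClamp :=
  fun _ _ h => max_le_max le_rfl (min_le_min le_rfl h)

lemma auxClamp_mem (t : ℝ) : auxClamp t ∈ Icc (0:ℝ) 1 :=
  ⟨le_max_left _ _, max_le zero_le_one (min_le_left _ _)⟩

lemma auxClamp_eq {t : ℝ} (h : t ∈ Icc (0:ℝ) 1) : auxClamp t = t := by
  unfold auxClamp
  rw [min_eq_right h.2, max_eq_right h.1]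

lemma auxClamp_lip {a b : ℝ} (hab : a ≤ b) : auxClamp b - auxClamp a ≤ b - a := by
  unfold auxClamp
  simp only [min_def, max_def]
  split_ifs <;> linarith

lemma aux_continuous_of_mono_lip {F : ℝ → ℝ} (hm : Monotone F)
    (hl : ∀ a b : ℝ, a ≤ b → F b - F a ≤ b - a) : Continuous F := by
  have : LipschitzWith 1 F := by
    refine LipschitzWith.of_dist_le_mul fun a b => ?_
    rw [Real.dist_eq, Real.dist_eq, NNReal.coe_one, one_mul]
    rcases le_total a b with h | h
    · rw [abs_of_nonpos (by linarith [hm h]), abs_of_nonpos (by linarith)]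
      have := hl a b h; linarith
    · rw [abs_of_nonneg (by linarith [hm h]), abs_of_nonneg (by linarith)]
      have := hl b a h; linarith
  exact this.continuous


theorem idempotent_stochDecr_eq_pi (C : ℝ → ℝ → ℝ) (hC : IsCopula C)
    (hid : ∀ u ∈ Icc (0:ℝ) 1, ∀ v ∈ Icc (0:ℝ) 1, MarkovProduct C C u v = C u v)
    (hSD : StochDecr C) :
    ∀ u ∈ Icc (0:ℝ) 1, ∀ v ∈ Icc (0:ℝ) 1, C u v = u * v := by
  obtain ⟨hm0, hm1, rect⟩ := hC
  intro u hu v hv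
  have hI01 : (0:ℝ) ∈ Icc (0:ℝ) 1 := left_mem_Icc.2 zero_le_one
  have hI11 : (1:ℝ) ∈ Icc (0:ℝ) 1 := right_mem_Icc.2 zero_le_one
  -- monotonicity and Lipschitz properties from the rectangle inequality
  have mono2 : ∀ w ∈ Icc (0:ℝ) 1, ∀ s ∈ Icc (0:ℝ) 1, ∀ t ∈ Icc (0:ℝ) 1, s ≤ t →
      C w s ≤ C w t := by
    intro w hw s hs t ht hst
    have h := rect 0 w s t hI01 hw hs ht hw.1 hst
    have h1 := (hm1 s hs).1
    have h2 := (hm1 t ht).1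
    linarith
  have lip2 : ∀ w ∈ Icc (0:ℝ) 1, ∀ s ∈ Icc (0:ℝ) 1, ∀ t ∈ Icc (0:ℝ) 1, s ≤ t →
      C w t - C w s ≤ t - s := by
    intro w hw s hs t ht hst
    have h := rect w 1 s t hw hI11 hs ht hw.2 hst
    have h1 := (hm1 s hs).2
    have h2 := (hm1 t ht).2
    linarith
  have mono1 : ∀ w ∈ Icc (0:ℝ) 1, ∀ s ∈ Icc (0:ℝ) 1, ∀ t ∈ Icc (0:ℝ) 1, s ≤ t →
      C s w ≤ C t w := by
    intro w hw s hs t ht hst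
    have h := rect s t 0 w hs ht hI01 hw hst hw.1
    have h1 := (hm0 s hs).1
    have h2 := (hm0 t ht).1
    linarith
  have lip1 : ∀ w ∈ Icc (0:ℝ) 1, ∀ s ∈ Icc (0:ℝ) 1, ∀ t ∈ Icc (0:ℝ) 1, s ≤ t →
      C t w - C s w ≤ t - s := by
    intro w hw s hs t ht hst
    have h := rect s t w 1 hs ht hw hI11 hst hw.2
    have h1 := (hm0 s hs).2
    have h2 := (hm0 t ht).2
    linarith
  -- upper bound from convexity
  have hupper : ∀ a ∈ Icc (0:ℝ) 1, ∀ b ∈ Icc (0:ℝ) 1, C a b ≤ a * b := by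
    intro a ha b hb
    have hcv := (hSD b hb).2 hI01 hI11 (sub_nonneg.2 ha.2) ha.1 (by ring)
    simp only [smul_eq_mul, mul_zero, mul_one, zero_add] at hcv
    rw [(hm1 b hb).1, (hm1 b hb).2] at hcv
    linarith
  set f : ℝ → ℝ := deriv (fun s => C u s) with hf_def
  set g : ℝ → ℝ := deriv (fun s => C s v) with hg_def
  -- clamped extensions
  set F : ℝ → ℝ := fun t => C u (auxClamp t) with hF_def
  set G : ℝ → ℝ := fun t => C (auxClamp t) v with hG_def
  have hFmono : Monotone F := fun a b hab =>
    mono2 u hu _ (auxClamp_mem a) _ (auxClamp_mem b) (auxClamp_mono hab)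
  have hFlip : ∀ a b : ℝ, a ≤ b → F b - F a ≤ b - a := fun a b hab =>
    (lip2 u hu _ (auxClamp_mem a) _ (auxClamp_mem b) (auxClamp_mono hab)).trans
      (auxClamp_lip hab)
  have hFcont : Continuous F := aux_continuous_of_mono_lip hFmono hFlip
  have hGmono : Monotone G := fun a b hab =>
    mono1 v hv _ (auxClamp_mem a) _ (auxClamp_mem b) (auxClamp_mono hab)
  have hGlip : ∀ a b : ℝ, a ≤ b → G b - G a ≤ b - a := fun a b hab =>
    (lip1 v hv _ (auxClamp_mem a) _ (auxClamp_mem b) (auxClamp_mono hab)).trans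
      (auxClamp_lip hab)
  have hFev : ∀ t ∈ Ioo (0:ℝ) 1, F =ᶠ[𝓝 t] fun s => C u s := by
    intro t ht
    filter_upwards [Ioo_mem_nhds ht.1 ht.2] with s hs
    simp only [hF_def]
    rw [auxClamp_eq (Ioo_subset_Icc_self hs)]
  have hGev : ∀ t ∈ Ioo (0:ℝ) 1, G =ᶠ[𝓝 t] fun s => C s v := by
    intro t ht
    filter_upwards [Ioo_mem_nhds ht.1 ht.2] with s hs
    simp only [hG_def]
    rw [auxClamp_eq (Ioo_subset_Icc_self hs)]
  have hFf : ∀ t ∈ Ioo (0:ℝ) 1, f t = deriv F t := fun t ht => ((hFev t ht).deriv_eq).symm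
  have hGg : ∀ t ∈ Ioo (0:ℝ) 1, g t = deriv G t := fun t ht => ((hGev t ht).deriv_eq).symm
  -- pointwise bounds for f and g on (0,1)
  have hf0 : ∀ t ∈ Ioo (0:ℝ) 1, 0 ≤ f t := fun t ht =>
    (hFf t ht) ▸ aux_deriv_nonneg_of_monotone hFmono t
  have hg0 : ∀ t ∈ Ioo (0:ℝ) 1, 0 ≤ g t := fun t ht =>
    (hGg t ht) ▸ aux_deriv_nonneg_of_monotone hGmono t
  have hf1 : ∀ t ∈ Ioo (0:ℝ) 1, f t ≤ 1 := by
    intro t ht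
    by_cases hd : DifferentiableAt ℝ (fun s => C u s) t
    · have hdF : DifferentiableAt ℝ F t := ((hFev t ht).differentiableAt_iff).2 hd
      have hmono' : Monotone (fun s => s - F s) := by
        intro a b hab
        have := hFlip a b hab
        simp only
        linarith
      have h0 := aux_deriv_nonneg_of_monotone hmono' t
      have hds : deriv (fun s => s - F s) t = 1 - deriv F t := by
        rw [deriv_fun_sub differentiableAt_fun_id hdF, deriv_id'']
      rw [hds] at h0
      rw [hFf t ht]
      linarith
    · show deriv (fun s => C u s) t ≤ 1
      rw [deriv_zero_of_not_differentiableAt hd]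
      exact zero_le_one
  have hg1 : ∀ t ∈ Ioo (0:ℝ) 1, g t ≤ 1 := by
    intro t ht
    by_cases hd : DifferentiableAt ℝ (fun s => C s v) t
    · have hdG : DifferentiableAt ℝ G t := ((hGev t ht).differentiableAt_iff).2 hd
      have hmono' : Monotone (fun s => s - G s) := by
        intro a b hab
        have := hGlip a b hab
        simp only
        linarith
      have h0 := aux_deriv_nonneg_of_monotone hmono' t
      have hds : deriv (fun s => s - G s) t = 1 - deriv G t := by
        rw [deriv_fun_sub differentiableAt_fun_id hdG, deriv_id'']
      rw [hds] at h0
      rw [hGg t ht]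
      linarith
    · show deriv (fun s => C s v) t ≤ 1
      rw [deriv_zero_of_not_differentiableAt hd]
      exact zero_le_one
  have hfm : Measurable f := measurable_deriv _
  have hgm : Measurable g := measurable_deriv _
  have haeIoo : ∀ᵐ t : ℝ, t ∈ Ioc (0:ℝ) 1 → t ∈ Ioo (0:ℝ) 1 := by
    have h1 : ∀ᵐ t : ℝ, t ≠ (1:ℝ) := by
      rw [ae_iff]
      have hs : {a : ℝ | ¬ a ≠ 1} = {1} := by ext x; simp
      rw [hs]
      exact measure_singleton 1
    filter_upwards [h1] with t ht htI
    exact ⟨htI.1, lt_of_le_of_ne htI.2 ht⟩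
  -- integrability
  have hintf : IntegrableOn f (Ioc (0:ℝ) 1) := by
    refine Integrable.mono' (integrable_const 1) hfm.aestronglyMeasurable ?_
    filter_upwards [ae_restrict_mem measurableSet_Ioc, ae_restrict_of_ae haeIoo] with t ht h'
    have ht' := h' ht
    rw [Real.norm_eq_abs, abs_le]
    exact ⟨by linarith [hf0 t ht'], hf1 t ht'⟩
  have hintg : IntegrableOn g (Ioc (0:ℝ) 1) := by
    refine Integrable.mono' (integrable_const 1) hgm.aestronglyMeasurable ?_
    filter_upwards [ae_restrict_mem measurableSet_Ioc, ae_restrict_of_ae haeIoo] with t ht h'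
    have ht' := h' ht
    rw [Real.norm_eq_abs, abs_le]
    exact ⟨by linarith [hg0 t ht'], hg1 t ht'⟩
  have hintfg : IntegrableOn (fun t => f t * g t) (Ioc (0:ℝ) 1) := by
    refine Integrable.mono' (integrable_const 1) (hfm.mul hgm).aestronglyMeasurable ?_
    filter_upwards [ae_restrict_mem measurableSet_Ioc, ae_restrict_of_ae haeIoo] with t ht h'
    have ht' := h' ht
    rw [Real.norm_eq_abs, abs_mul, abs_of_nonneg (hf0 t ht'), abs_of_nonneg (hg0 t ht')]
    calc f t * g t ≤ 1 * 1 := mul_le_mul (hf1 t ht') (hg1 t ht') (hg0 t ht') zero_le_one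
      _ = 1 := mul_one 1
  -- derivatives of the margins
  have hd1 : ∀ t ∈ Ioo (0:ℝ) 1, deriv (fun s => C s 1) t = 1 := by
    intro t ht
    have hev : (fun s => C s 1) =ᶠ[𝓝 t] fun s => s := by
      filter_upwards [Ioo_mem_nhds ht.1 ht.2] with s hs
      exact (hm0 s (Ioo_subset_Icc_self hs)).2
    rw [hev.deriv_eq]
    exact deriv_id t
  have hd2 : ∀ t ∈ Ioo (0:ℝ) 1, deriv (fun s => C 1 s) t = 1 := by
    intro t ht
    have hev : (fun s => C 1 s) =ᶠ[𝓝 t] fun s => s := by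
      filter_upwards [Ioo_mem_nhds ht.1 ht.2] with s hs
      exact (hm1 s (Ioo_subset_Icc_self hs)).2
    rw [hev.deriv_eq]
    exact deriv_id t
  -- the three integral identities from idempotence
  have hIf : ∫ t in (0:ℝ)..1, f t = u := by
    have hmp : MarkovProduct C C u 1 = ∫ t in (0:ℝ)..1, f t := by
      unfold MarkovProduct
      refine intervalIntegral.integral_congr_ae ?_
      filter_upwards [haeIoo] with t ht htI
      rw [uIoc_of_le zero_le_one] at htI
      rw [hd1 t (ht htI), mul_one]
    have h := hid u hu 1 hI11
    rw [(hm0 u hu).2] at h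
    exact hmp.symm.trans h
  have hIg : ∫ t in (0:ℝ)..1, g t = v := by
    have hmp : MarkovProduct C C 1 v = ∫ t in (0:ℝ)..1, g t := by
      unfold MarkovProduct
      refine intervalIntegral.integral_congr_ae ?_
      filter_upwards [haeIoo] with t ht htI
      rw [uIoc_of_le zero_le_one] at htI
      rw [hd2 t (ht htI), one_mul]
    have h := hid 1 hI11 v hv
    rw [(hm1 v hv).2] at h
    exact hmp.symm.trans h
  have hIfg : ∫ t in (0:ℝ)..1, f t * g t = C u v := by
    have h := hid u hu v hv
    unfold MarkovProduct at h
    exact h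
  -- FTC inequality
  have hftc : ∀ τ ∈ Icc (0:ℝ) 1, ∫ t in (0:ℝ)..τ, f t ≤ u * τ := by
    intro τ hτ
    have h1 : ∫ t in (0:ℝ)..τ, f t = ∫ t in (0:ℝ)..τ, deriv F t := by
      refine intervalIntegral.integral_congr_ae ?_
      filter_upwards [haeIoo] with t ht htI
      rw [uIoc_of_le hτ.1] at htI
      exact hFf t (ht ⟨htI.1, htI.2.trans hτ.2⟩)
    have h2 := aux_integral_deriv_le_of_monotone hFmono hFcont hτ.1
    have h3 : F τ - F 0 = C u τ := by
      simp only [hF_def]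
      rw [auxClamp_eq hτ, auxClamp_eq hI01, (hm0 u hu).1, sub_zero]
    rw [h1]
    calc ∫ t in (0:ℝ)..τ, deriv F t ≤ F τ - F 0 := h2
      _ = C u τ := h3
      _ ≤ u * τ := hupper u hu τ hτ
  -- segment lower bound
  have hseg : ∀ τ ∈ Icc (0:ℝ) 1, 0 ≤ ∫ t in Ioo τ 1, (f t - u) := by
    intro τ hτ
    have hiif : IntervalIntegrable f volume 0 τ :=
      (intervalIntegrable_iff_integrableOn_Ioc_of_le hτ.1).2
        (hintf.mono_set (Ioc_subset_Ioc le_rfl hτ.2))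
    have hiif2 : IntervalIntegrable f volume τ 1 :=
      (intervalIntegrable_iff_integrableOn_Ioc_of_le hτ.2).2
        (hintf.mono_set (Ioc_subset_Ioc hτ.1 le_rfl))
    have hadd := intervalIntegral.integral_add_adjacent_intervals hiif hiif2
    have hsub : ∫ t in τ..1, (f t - u) = (∫ t in τ..1, f t) - (1 - τ) * u := by
      rw [intervalIntegral.integral_sub hiif2 intervalIntegrable_const,
        intervalIntegral.integral_const, smul_eq_mul]
    have hIooIoc : ∫ t in Ioo τ 1, (f t - u) = ∫ t in τ..1, (f t - u) := by
      rw [intervalIntegral.integral_of_le hτ.2, integral_Ioc_eq_integral_Ioo]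
    rw [hIooIoc, hsub]
    have h := hftc τ hτ
    rw [hIf] at hadd
    linarith
  -- layer cake inner identity
  have key1 : ∀ t ∈ Ioo (0:ℝ) 1,
      (∫ c in Ioo (0:ℝ) 1, (if c < g t then (1:ℝ) else 0)) = g t := by
    intro t ht
    have hrw : (fun c => if c < g t then (1:ℝ) else 0)
        = (Iio (g t)).indicator (fun _ => (1:ℝ)) := by
      funext c
      simp [Set.indicator_apply, Set.mem_Iio]
    rw [hrw, setIntegral_indicator measurableSet_Iio]
    have hset : Ioo (0:ℝ) 1 ∩ Iio (g t) = Ioo 0 (g t) := by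
      ext c
      simp only [mem_inter_iff, mem_Ioo, mem_Iio]
      exact ⟨fun h => ⟨h.1.1, h.2⟩, fun h => ⟨⟨h.1, lt_of_lt_of_le h.2 (hg1 t ht)⟩, h.2⟩⟩
    rw [hset, setIntegral_const, Real.volume_real_Ioo_of_le (hg0 t ht), smul_eq_mul, mul_one,
      sub_zero]
  set μ : Measure ℝ := volume.restrict (Ioo (0:ℝ) 1) with hμ
  haveI : IsFiniteMeasure μ := by
    constructor
    rw [hμ, Measure.restrict_apply_univ, Real.volume_Ioo]
    exact ENNReal.ofReal_lt_top
  -- product integrability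
  have hΦm : Measurable (fun p : ℝ × ℝ => (f p.1 - u) * (if p.2 < g p.1 then (1:ℝ) else 0)) := by
    apply Measurable.mul
    · exact (hfm.comp measurable_fst).sub measurable_const
    · exact Measurable.ite (measurableSet_lt measurable_snd (hgm.comp measurable_fst))
        measurable_const measurable_const
  have hΦint : Integrable
      (Function.uncurry fun t c => (f t - u) * (if c < g t then (1:ℝ) else 0)) (μ.prod μ) := by
    refine Integrable.mono' (integrable_const 1) hΦm.aestronglyMeasurable ?_
    have hprodeq : μ.prod μ
        = (volume.prod volume).restrict ((Ioo (0:ℝ) 1) ×ˢ (Ioo (0:ℝ) 1)) :=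
      Measure.prod_restrict _ _
    rw [hprodeq]
    filter_upwards [ae_restrict_mem (measurableSet_Ioo.prod measurableSet_Ioo)] with p hp
    obtain ⟨hp1, hp2⟩ := hp
    rw [Function.uncurry, Real.norm_eq_abs, abs_mul]
    have h1 : |f p.1 - u| ≤ 1 :=
      abs_le.2 ⟨by linarith [hf0 _ hp1, hu.2], by linarith [hf1 _ hp1, hu.1]⟩
    have h2 : |if p.2 < g p.1 then (1:ℝ) else 0| ≤ 1 := by
      split_ifs <;> simp
    calc |f p.1 - u| * |if p.2 < g p.1 then (1:ℝ) else 0| ≤ 1 * 1 :=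
        mul_le_mul h1 h2 (abs_nonneg _) zero_le_one
      _ = 1 := mul_one 1
  have hswap := integral_integral_swap hΦint
  -- inner integral over c equals (f t - u) * g t
  have hLHS : (∫ t, (∫ c, (f t - u) * (if c < g t then (1:ℝ) else 0) ∂μ) ∂μ)
      = ∫ t in Ioo (0:ℝ) 1, (f t - u) * g t := by
    rw [hμ]
    refine setIntegral_congr_fun measurableSet_Ioo fun t ht => ?_
    rw [integral_const_mul, key1 t ht]
  -- each slice integral is nonnegative
  have hA : ∀ c : ℝ, 0 ≤ ∫ t, (f t - u) * (if c < g t then (1:ℝ) else 0) ∂μ := by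
    intro c
    have hind : (fun t => (f t - u) * (if c < g t then (1:ℝ) else 0))
        = {t : ℝ | c < g t}.indicator (fun t => f t - u) := by
      funext t
      by_cases h : c < g t <;> simp [Set.indicator_apply, h]
    rw [hμ, hind, setIntegral_indicator (measurableSet_lt measurable_const hgm)]
    set Dset : Set ℝ := {t | DifferentiableAt ℝ (fun s => C s v) t} with hDset
    have hNnull : volume ((Ioo (0:ℝ) 1) \ Dset) = 0 := by
      have hae : ∀ᵐ t : ℝ, DifferentiableAt ℝ G t := hGmono.ae_differentiableAt
      have hae2 : ∀ᵐ t : ℝ, t ∈ Ioo (0:ℝ) 1 → t ∈ Dset := by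
        filter_upwards [hae] with t htd htI
        exact ((hGev t htI).differentiableAt_iff).1 htd
      have hseteq : (Ioo (0:ℝ) 1 \ Dset) = {t | ¬ (t ∈ Ioo (0:ℝ) 1 → t ∈ Dset)} := by
        ext t
        simp [Classical.not_imp, and_assoc]
      rw [hseteq]
      exact ae_iff.1 hae2
    have hgmono2 : ∀ s, s ∈ Ioo (0:ℝ) 1 → s ∈ Dset → ∀ t, t ∈ Ioo (0:ℝ) 1 → t ∈ Dset →
        s ≤ t → g s ≤ g t := by
      intro s hs hsD t htI htD hst
      rcases eq_or_lt_of_le hst with rfl | hlt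
      · exact le_rfl
      · exact le_trans
          ((hSD v hv).deriv_le_slope (Ioo_subset_Icc_self hs) (Ioo_subset_Icc_self htI) hlt hsD)
          ((hSD v hv).slope_le_deriv (Ioo_subset_Icc_self hs) (Ioo_subset_Icc_self htI) hlt htD)
    set E : Set ℝ := Ioo (0:ℝ) 1 ∩ {t | c < g t} with hE
    by_cases hTne : (E ∩ Dset).Nonempty
    · have hTsub : E ∩ Dset ⊆ Ioo (0:ℝ) 1 := fun t ht => ht.1.1
      have hbdd : BddBelow (E ∩ Dset) := ⟨0, fun t ht => (hTsub ht).1.le⟩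
      set τ := sInf (E ∩ Dset) with hτdef
      have hτ0 : 0 ≤ τ := le_csInf hTne fun t ht => (hTsub ht).1.le
      have hτ1 : τ ≤ 1 := by
        obtain ⟨t, ht⟩ := hTne
        exact (csInf_le hbdd ht).trans (hTsub ht).2.le
      have hEae : E =ᵐ[volume] Ioo τ 1 := by
        refine (ae_eq_set).2 ⟨?_, ?_⟩
        · refine measure_mono_null (fun t ht => ?_)
            (measure_union_null hNnull (measure_singleton τ))
          obtain ⟨htE, htI⟩ := ht
          by_cases htD : t ∈ Dset
          · right
            have hle : τ ≤ t := csInf_le hbdd ⟨htE, htD⟩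
            have : ¬ (τ < t ∧ t < 1) := htI
            have ht1 : t < 1 := htE.1.2
            have : t ≤ τ := by
              by_contra hc2
              exact this ⟨lt_of_not_ge hc2, ht1⟩
            simp [le_antisymm this hle]
          · left
            exact ⟨htE.1, htD⟩
        · refine measure_mono_null (fun t ht => ?_) hNnull
          obtain ⟨⟨hτt, ht1⟩, htE⟩ := ht
          have htIoo : t ∈ Ioo (0:ℝ) 1 := ⟨lt_of_le_of_lt hτ0 hτt, ht1⟩
          refine ⟨htIoo, fun htD => htE ?_⟩
          obtain ⟨s, hsT, hst⟩ := (csInf_lt_iff hbdd hTne).1 hτt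
          exact ⟨htIoo, lt_of_lt_of_le hsT.1.2
            (hgmono2 s hsT.1.1 hsT.2 t htIoo htD hst.le)⟩
      rw [setIntegral_congr_set hEae]
      exact hseg τ ⟨hτ0, hτ1⟩
    · have hEnull : volume E = 0 := by
        refine measure_mono_null (fun t ht => ?_) hNnull
        exact ⟨ht.1, fun hD => hTne ⟨t, ht, hD⟩⟩
      have : volume.restrict E = 0 := Measure.restrict_eq_zero.2 hEnull
      rw [this, integral_zero_measure]
  -- assemble
  have hmain : 0 ≤ ∫ t in Ioo (0:ℝ) 1, (f t - u) * g t := by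
    rw [← hLHS, hswap]
    exact integral_nonneg fun c => hA c
  have hIoofg : ∫ t in Ioo (0:ℝ) 1, f t * g t = C u v := by
    rw [← hIfg, intervalIntegral.integral_of_le zero_le_one, integral_Ioc_eq_integral_Ioo]
  have hIoog : ∫ t in Ioo (0:ℝ) 1, g t = v := by
    rw [← hIg, intervalIntegral.integral_of_le zero_le_one, integral_Ioc_eq_integral_Ioo]
  have h1 : IntegrableOn (fun t => f t * g t) (Ioo (0:ℝ) 1) :=
    hintfg.mono_set Ioo_subset_Ioc_self
  have h2 : IntegrableOn g (Ioo (0:ℝ) 1) := hintg.mono_set Ioo_subset_Ioc_self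
  have hsplit : ∫ t in Ioo (0:ℝ) 1, (f t - u) * g t
      = (∫ t in Ioo (0:ℝ) 1, f t * g t) - u * ∫ t in Ioo (0:ℝ) 1, g t := by
    simp_rw [sub_mul]
    rw [integral_sub h1 (h2.const_mul u), integral_const_mul]
  rw [hsplit, hIoofg, hIoog] at hmain
  have hfinal : u * v ≤ C u v := by linarith
  exact le_antisymm (hupper u hu v hv) hfinal
end

section
/- Let C be an idempotent 2-copula (C * C = C under the Markov product) which is stochastically increasing in the first component. Then for all u, v ∈ (0,1): (v − C(v,v)) · ∂₂⁻C(u,v) = C(u,v) − C(u, C(v,v)), where ∂₂⁻C denotes the left-hand partial derivative in the second variable (which exists everywhere by concavity/symmetry considerations). -/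
open MeasureTheory Set Filter

open Topology

namespace CopAux

variable {C : ℝ → ℝ → ℝ}

/-- monotone in second variable -/
lemma mono2 (hC : IsCopula C) {u : ℝ} (hu : u ∈ Icc (0:ℝ) 1)
    {v₁ v₂ : ℝ} (h1 : v₁ ∈ Icc (0:ℝ) 1) (h2 : v₂ ∈ Icc (0:ℝ) 1) (h : v₁ ≤ v₂) :
    C u v₁ ≤ C u v₂ := by
  have := hC.2.2 0 u v₁ v₂ ⟨le_refl 0, zero_le_one⟩ hu h1 h2 hu.1 h
  have e1 := (hC.2.1 v₁ h1).1
  have e2 := (hC.2.1 v₂ h2).1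
  nlinarith

/-- monotone in first variable -/
lemma mono1 (hC : IsCopula C) {w : ℝ} (hw : w ∈ Icc (0:ℝ) 1)
    {u₁ u₂ : ℝ} (h1 : u₁ ∈ Icc (0:ℝ) 1) (h2 : u₂ ∈ Icc (0:ℝ) 1) (h : u₁ ≤ u₂) :
    C u₁ w ≤ C u₂ w := by
  have := hC.2.2 u₁ u₂ 0 w h1 h2 ⟨le_refl 0, zero_le_one⟩ hw h hw.1
  have e1 := (hC.1 u₁ h1).1
  have e2 := (hC.1 u₂ h2).1
  nlinarith

/-- 1-Lipschitz upper bound in second variable -/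
lemma lip2 (hC : IsCopula C) {u : ℝ} (hu : u ∈ Icc (0:ℝ) 1)
    {v₁ v₂ : ℝ} (h1 : v₁ ∈ Icc (0:ℝ) 1) (h2 : v₂ ∈ Icc (0:ℝ) 1) (h : v₁ ≤ v₂) :
    C u v₂ - C u v₁ ≤ v₂ - v₁ := by
  have := hC.2.2 u 1 v₁ v₂ hu ⟨zero_le_one, le_refl 1⟩ h1 h2 hu.2 h
  have e1 := (hC.2.1 v₁ h1).2
  have e2 := (hC.2.1 v₂ h2).2
  nlinarith

lemma lip1 (hC : IsCopula C) {w : ℝ} (hw : w ∈ Icc (0:ℝ) 1)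
    {u₁ u₂ : ℝ} (h1 : u₁ ∈ Icc (0:ℝ) 1) (h2 : u₂ ∈ Icc (0:ℝ) 1) (h : u₁ ≤ u₂) :
    C u₂ w - C u₁ w ≤ u₂ - u₁ := by
  have := hC.2.2 u₁ u₂ w 1 h1 h2 hw ⟨zero_le_one, le_refl 1⟩ h hw.2
  have e1 := (hC.1 u₁ h1).2
  have e2 := (hC.1 u₂ h2).2
  nlinarith

lemma nonneg (hC : IsCopula C) {u v : ℝ} (hu : u ∈ Icc (0:ℝ) 1) (hv : v ∈ Icc (0:ℝ) 1) :
    0 ≤ C u v := by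
  have := mono1 hC hv ⟨le_refl 0, zero_le_one⟩ hu hu.1
  rwa [(hC.2.1 v hv).1] at this

lemma le_fst (hC : IsCopula C) {u v : ℝ} (hu : u ∈ Icc (0:ℝ) 1) (hv : v ∈ Icc (0:ℝ) 1) :
    C u v ≤ u := by
  have := mono2 hC hu hv ⟨zero_le_one, le_refl 1⟩ hv.2
  rwa [(hC.1 u hu).2] at this

lemma le_snd (hC : IsCopula C) {u v : ℝ} (hu : u ∈ Icc (0:ℝ) 1) (hv : v ∈ Icc (0:ℝ) 1) :
    C u v ≤ v := by
  have := mono1 hC hv hu ⟨zero_le_one, le_refl 1⟩ hu.2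
  rwa [(hC.2.1 v hv).2] at this

lemma mem_Icc01 (hC : IsCopula C) {u v : ℝ} (hu : u ∈ Icc (0:ℝ) 1) (hv : v ∈ Icc (0:ℝ) 1) :
    C u v ∈ Icc (0:ℝ) 1 :=
  ⟨nonneg hC hu hv, (le_fst hC hu hv).trans hu.2⟩

/-- M-point lemma: if `C a a = a` then `C a y = min a y`. -/
lemma Mpoint_fst (hC : IsCopula C) {a : ℝ} (ha : a ∈ Icc (0:ℝ) 1) (haa : C a a = a)
    {y : ℝ} (hy : y ∈ Icc (0:ℝ) 1) : C a y = min a y := by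
  rcases le_total y a with h | h
  · -- y ≤ a : C a y ≤ y and C a y ≥ C a a - (a - y) = y
    have h1 := le_snd hC ha hy
    have h2 := lip2 hC ha hy ha h
    rw [haa] at h2
    rw [min_eq_right h]
    linarith
  · have h1 := le_fst hC ha hy
    have h2 := mono2 hC ha ha hy h
    rw [haa] at h2
    rw [min_eq_left h]
    linarith

/-- M-point lemma, first argument varies. -/
lemma Mpoint_snd (hC : IsCopula C) {a : ℝ} (ha : a ∈ Icc (0:ℝ) 1) (haa : C a a = a)
    {y : ℝ} (hy : y ∈ Icc (0:ℝ) 1) : C y a = min y a := by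
  rcases le_total y a with h | h
  · have h1 := le_fst hC hy ha
    have h2 := lip1 hC ha hy ha h
    rw [haa] at h2
    rw [min_eq_left h]
    linarith
  · have h1 := le_snd hC hy ha
    have h2 := mono1 hC ha ha hy h
    rw [haa] at h2
    rw [min_eq_right h]
    linarith

/-- the diagonal is monotone-dominating: `a ≤ z` implies `C a a ≤ C z z`. -/
lemma diag_mono (hC : IsCopula C) {a z : ℝ} (ha : a ∈ Icc (0:ℝ) 1) (hz : z ∈ Icc (0:ℝ) 1)
    (h : a ≤ z) : C a a ≤ C z z :=
  (mono1 hC ha ha hz h).trans (mono2 hC hz ha hz h)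

/-- diagonal Lipschitz -/
lemma diag_lip (hC : IsCopula C) {a z : ℝ} (ha : a ∈ Icc (0:ℝ) 1) (hz : z ∈ Icc (0:ℝ) 1)
    (h : a ≤ z) : C z z - C a a ≤ 2 * (z - a) := by
  have h1 := lip1 hC hz ha hz h
  have h2 := lip2 hC ha ha hz h
  linarith [lip1 hC ha ha hz h, lip2 hC hz ha hz h]

end CopAux

namespace CopAux

/-- clamp to [0,1] -/
noncomputable def cl (x : ℝ) : ℝ := max 0 (min 1 x)

lemma cl_mem (x : ℝ) : cl x ∈ Icc (0:ℝ) 1 := by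
  constructor
  · exact le_max_left _ _
  · rcases le_total 1 x with h | h
    · simp [cl, min_eq_left h]
    · simp [cl, min_eq_right h]
      exact h

lemma cl_of_mem {x : ℝ} (hx : x ∈ Icc (0:ℝ) 1) : cl x = x := by
  simp [cl, min_eq_right hx.2, max_eq_right hx.1]

lemma cl_mono : Monotone cl := by
  intro x y h
  exact max_le_max (le_refl 0) (min_le_min (le_refl 1) h)

lemma cl_lip {x y : ℝ} (h : x ≤ y) : cl y - cl x ≤ y - x := by
  unfold cl
  rcases le_total 1 x with h1 | h1
  · rw [min_eq_left h1, min_eq_left (h1.trans h)]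
    linarith
  · rw [min_eq_right h1]
    rcases le_total 1 y with h2 | h2
    · rw [min_eq_left h2]
      rcases le_total x 0 with h3 | h3
      · rw [max_eq_left h3]
        have e : max 0 (1:ℝ) = 1 := by norm_num
        rw [e]; linarith
      · rw [max_eq_right h3]
        have e : max 0 (1:ℝ) = 1 := by norm_num
        rw [e]; linarith
    · rw [min_eq_right h2]
      rcases le_total x 0 with h3 | h3
      · rw [max_eq_left h3]
        rcases le_total y 0 with h4 | h4
        · rw [max_eq_left h4]; linarith
        · rw [max_eq_right h4]; linarith
      · rw [max_eq_right h3, max_eq_right (h3.trans h)]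

lemma cl_eventually_eq {t : ℝ} (ht : t ∈ Ioo (0:ℝ) 1) : ∀ᶠ s in nhds t, cl s = s := by
  have : Ioo (0:ℝ) 1 ∈ nhds t := isOpen_Ioo.mem_nhds ht
  filter_upwards [this] with s hs
  exact cl_of_mem ⟨hs.1.le, hs.2.le⟩

lemma nonneg_of_hasDerivAt_mono {f : ℝ → ℝ} {d x : ℝ} (h : HasDerivAt f d x)
    (hm : Monotone f) : 0 ≤ d := by
  have ht : Tendsto (slope f x) (𝓝[>] x) (𝓝 d) :=
    (hasDerivAt_iff_tendsto_slope.1 h).mono_left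
      (nhdsWithin_mono x fun y hy => ne_of_gt hy)
  refine ge_of_tendsto ht ?_
  filter_upwards [self_mem_nhdsWithin] with y hy
  have : (0:ℝ) < y - x := by simp only [mem_Ioi] at hy; linarith
  rw [slope_def_field]
  have hfx : f x ≤ f y := hm (le_of_lt (by simpa [mem_Ioi] using hy : x < y))
  exact div_nonneg (by linarith) (by linarith)

/-- a monotone 1-Lipschitz function has `deriv` everywhere in `[0,1]`. -/
lemma deriv_mem_Icc_of_mono_lip {f : ℝ → ℝ} (hm : Monotone f)
    (hl : ∀ x y : ℝ, x ≤ y → f y - f x ≤ y - x) (x : ℝ) :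
    deriv f x ∈ Icc (0:ℝ) 1 := by
  by_cases hd : DifferentiableAt ℝ f x
  · constructor
    · exact nonneg_of_hasDerivAt_mono hd.hasDerivAt hm
    · have hg : Monotone (fun y => y - f y) := by
        intro a b hab
        have := hl a b hab
        simp only
        linarith
      have hgd : HasDerivAt (fun y => y - f y) (1 - deriv f x) x :=
        (hasDerivAt_id x).sub hd.hasDerivAt
      have h0 : 0 ≤ 1 - deriv f x := nonneg_of_hasDerivAt_mono hgd hg
      linarith
  · rw [deriv_zero_of_not_differentiableAt hd]
    exact ⟨le_refl 0, zero_le_one⟩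

/-- Fundamental inequality: for a monotone continuous function,
the integral of the derivative is at most the increment. -/
lemma integral_deriv_le_of_mono_cont {f : ℝ → ℝ} (hm : Monotone f) (hc : Continuous f)
    {a b : ℝ} (hab : a ≤ b) :
    ∫ t in a..b, deriv f t ≤ f b - f a := by
  set S : StieltjesFunction ℝ := ⟨f, hm, fun x => (hc.continuousAt (x := x)).continuousWithinAt⟩
    with hS
  have hae : ∀ᵐ x, HasDerivAt f ((S.measure.rnDeriv volume x).toReal) x :=
    S.ae_hasDerivAt
  have hcong : ∀ᵐ x, deriv f x = (S.measure.rnDeriv volume x).toReal := by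
    filter_upwards [hae] with x hx using hx.deriv
  have h1 : ∫ t in a..b, deriv f t = ∫ t in a..b, (S.measure.rnDeriv volume t).toReal := by
    apply intervalIntegral.integral_congr_ae
    filter_upwards [hcong] with x hx _ using hx
  rw [h1, intervalIntegral.integral_of_le hab]
  have h4 : S.measure (Ioc a b) = ENNReal.ofReal (f b - f a) := S.measure_Ioc a b
  have h2 : ∫ t in Ioc a b, (S.measure.rnDeriv volume t).toReal
      = (∫⁻ t in Ioc a b, S.measure.rnDeriv volume t).toReal := by
    apply MeasureTheory.integral_toReal
    · exact (S.measure.measurable_rnDeriv volume).aemeasurable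
    · exact ae_restrict_of_ae (Measure.rnDeriv_lt_top S.measure volume)
  have h3 : (∫⁻ t in Ioc a b, S.measure.rnDeriv volume t) ≤ S.measure (Ioc a b) :=
    MeasureTheory.Measure.setLIntegral_rnDeriv_le _
  calc ∫ t in Ioc a b, (S.measure.rnDeriv volume t).toReal
      = (∫⁻ t in Ioc a b, S.measure.rnDeriv volume t).toReal := h2
    _ ≤ (S.measure (Ioc a b)).toReal := by
        apply ENNReal.toReal_mono _ h3
        rw [h4]; exact ENNReal.ofReal_ne_top
    _ = f b - f a := by rw [h4, ENNReal.toReal_ofReal (by linarith [hm hab])]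

end CopAux


namespace CopAux
variable {C : ℝ → ℝ → ℝ}

/-- extension of `C u ·` to all of `ℝ` -/
noncomputable def e2 (C : ℝ → ℝ → ℝ) (u : ℝ) : ℝ → ℝ := fun t => C u (cl t)
/-- extension of `C · w` to all of `ℝ` -/
noncomputable def e1 (C : ℝ → ℝ → ℝ) (w : ℝ) : ℝ → ℝ := fun x => C (cl x) w

lemma e2_mono (hC : IsCopula C) {u : ℝ} (hu : u ∈ Icc (0:ℝ) 1) : Monotone (e2 C u) :=
  fun x y h => mono2 hC hu (cl_mem x) (cl_mem y) (cl_mono h)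

lemma e1_mono (hC : IsCopula C) {w : ℝ} (hw : w ∈ Icc (0:ℝ) 1) : Monotone (e1 C w) :=
  fun x y h => mono1 hC hw (cl_mem x) (cl_mem y) (cl_mono h)

lemma e2_lip (hC : IsCopula C) {u : ℝ} (hu : u ∈ Icc (0:ℝ) 1) :
    ∀ x y : ℝ, x ≤ y → e2 C u y - e2 C u x ≤ y - x := fun x y h =>
  (lip2 hC hu (cl_mem x) (cl_mem y) (cl_mono h)).trans (cl_lip h)

lemma e1_lip (hC : IsCopula C) {w : ℝ} (hw : w ∈ Icc (0:ℝ) 1) :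
    ∀ x y : ℝ, x ≤ y → e1 C w y - e1 C w x ≤ y - x := fun x y h =>
  (lip1 hC hw (cl_mem x) (cl_mem y) (cl_mono h)).trans (cl_lip h)

lemma cont_of_mono_lip {f : ℝ → ℝ} (hm : Monotone f)
    (hl : ∀ x y : ℝ, x ≤ y → f y - f x ≤ y - x) : Continuous f := by
  have : LipschitzWith 1 f := by
    apply LipschitzWith.of_dist_le_mul
    intro x y
    rcases le_total x y with h | h
    · rw [Real.dist_eq, Real.dist_eq, abs_of_nonpos (by linarith [hm h]),
        abs_of_nonpos (by linarith)]
      have := hl x y h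
      simp only [NNReal.coe_one, one_mul]
      linarith
    · rw [Real.dist_eq, Real.dist_eq, abs_of_nonneg (by linarith [hm h]),
        abs_of_nonneg (by linarith)]
      have := hl y x h
      simp only [NNReal.coe_one, one_mul]
      linarith
  exact this.continuous

lemma e2_cont (hC : IsCopula C) {u : ℝ} (hu : u ∈ Icc (0:ℝ) 1) : Continuous (e2 C u) :=
  cont_of_mono_lip (e2_mono hC hu) (e2_lip hC hu)

lemma e1_cont (hC : IsCopula C) {w : ℝ} (hw : w ∈ Icc (0:ℝ) 1) : Continuous (e1 C w) :=
  cont_of_mono_lip (e1_mono hC hw) (e1_lip hC hw)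

lemma e2_deriv_mem (hC : IsCopula C) {u : ℝ} (hu : u ∈ Icc (0:ℝ) 1) (x : ℝ) :
    deriv (e2 C u) x ∈ Icc (0:ℝ) 1 :=
  deriv_mem_Icc_of_mono_lip (e2_mono hC hu) (e2_lip hC hu) x

lemma e1_deriv_mem (hC : IsCopula C) {w : ℝ} (hw : w ∈ Icc (0:ℝ) 1) (x : ℝ) :
    deriv (e1 C w) x ∈ Icc (0:ℝ) 1 :=
  deriv_mem_Icc_of_mono_lip (e1_mono hC hw) (e1_lip hC hw) x

lemma e2_deriv_eq (C : ℝ → ℝ → ℝ) (u : ℝ) {t : ℝ} (ht : t ∈ Ioo (0:ℝ) 1) :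
    deriv (fun s => C u s) t = deriv (e2 C u) t := by
  apply Filter.EventuallyEq.deriv_eq
  filter_upwards [cl_eventually_eq ht] with s hs
  simp [e2, hs]

lemma e1_deriv_eq (C : ℝ → ℝ → ℝ) (w : ℝ) {t : ℝ} (ht : t ∈ Ioo (0:ℝ) 1) :
    deriv (fun s => C s w) t = deriv (e1 C w) t := by
  apply Filter.EventuallyEq.deriv_eq
  filter_upwards [cl_eventually_eq ht] with s hs
  simp [e1, hs]

lemma ae_Ioo : ∀ᵐ t : ℝ, t ∈ Set.uIoc (0:ℝ) 1 → t ∈ Ioo (0:ℝ) 1 := by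
  have h : (volume : Measure ℝ) {(1:ℝ)} = 0 := measure_singleton 1
  rw [← MeasureTheory.compl_mem_ae_iff] at h
  filter_upwards [h] with t ht hmem
  rw [Set.uIoc_of_le zero_le_one] at hmem
  rcases hmem with ⟨h1, h2⟩
  rcases lt_or_eq_of_le h2 with h3 | h3
  · exact ⟨h1, h3⟩
  · exact absurd h3 (by simpa using ht)

/-- measurable bounded functions are interval integrable -/
lemma ii_of_meas_bdd {f : ℝ → ℝ} (hf : Measurable f) (hb : ∀ x, |f x| ≤ 1) (a b : ℝ) :
    IntervalIntegrable f volume a b := by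
  constructor <;>
  · apply MeasureTheory.Integrable.mono' (g := fun _ => (1:ℝ))
    · exact MeasureTheory.integrableOn_const measure_Ioc_lt_top.ne
    · exact hf.aestronglyMeasurable
    · exact Filter.Eventually.of_forall fun x => by simpa using hb x

lemma deriv_e2_ii (hC : IsCopula C) {u : ℝ} (hu : u ∈ Icc (0:ℝ) 1) (a b : ℝ) :
    IntervalIntegrable (deriv (e2 C u)) volume a b := by
  apply ii_of_meas_bdd (measurable_deriv _)
  intro x
  have := e2_deriv_mem hC hu x
  rw [abs_le]; exact ⟨by linarith [this.1], this.2⟩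

lemma deriv_e1_ii (hC : IsCopula C) {w : ℝ} (hw : w ∈ Icc (0:ℝ) 1) (a b : ℝ) :
    IntervalIntegrable (deriv (e1 C w)) volume a b := by
  apply ii_of_meas_bdd (measurable_deriv _)
  intro x
  have := e1_deriv_mem hC hw x
  rw [abs_le]; exact ⟨by linarith [this.1], this.2⟩

/-- restatement of the Markov product via the extended functions -/
lemma markov_eq (hC : IsCopula C) (u v : ℝ) :
    MarkovProduct C C u v = ∫ t in (0:ℝ)..1, deriv (e2 C u) t * deriv (e1 C v) t := by
  apply intervalIntegral.integral_congr_ae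
  filter_upwards [ae_Ioo] with t ht hmem
  rw [e2_deriv_eq C u (ht hmem), e1_deriv_eq C v (ht hmem)]

end CopAux


namespace CopAux
variable {C : ℝ → ℝ → ℝ}

lemma mem01 : (0:ℝ) ∈ Icc (0:ℝ) 1 := ⟨le_refl 0, zero_le_one⟩
lemma mem11 : (1:ℝ) ∈ Icc (0:ℝ) 1 := ⟨zero_le_one, le_refl 1⟩

/-- `hid u 1` : the total integral of `∂₂C(u,·)` is `u`. -/
lemma int_e2_total (hC : IsCopula C)
    (hid : ∀ u ∈ Icc (0:ℝ) 1, ∀ v ∈ Icc (0:ℝ) 1, MarkovProduct C C u v = C u v)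
    {u : ℝ} (hu : u ∈ Icc (0:ℝ) 1) :
    ∫ t in (0:ℝ)..1, deriv (e2 C u) t = u := by
  have h1 := hid u hu 1 mem11
  rw [(hC.1 u hu).2] at h1
  have h2 : MarkovProduct C C u 1 = ∫ t in (0:ℝ)..1, deriv (e2 C u) t := by
    unfold MarkovProduct
    apply intervalIntegral.integral_congr_ae
    filter_upwards [ae_Ioo] with t ht hmem
    have htoo := ht hmem
    have hd1 : deriv (fun s => C s 1) t = 1 := by
      have he : (fun s => C s 1) =ᶠ[nhds t] (fun s => s) := by
        have hm : Ioo (0:ℝ) 1 ∈ nhds t := isOpen_Ioo.mem_nhds htoo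
        filter_upwards [hm] with s hs
        exact (hC.1 s ⟨hs.1.le, hs.2.le⟩).2
      rw [he.deriv_eq, deriv_id'']
    rw [e2_deriv_eq C u htoo, hd1, mul_one]
  rw [← h2, h1]

/-- `hid 1 w` : the total integral of `∂₁C(·,w)` is `w`. -/
lemma int_e1_total (hC : IsCopula C)
    (hid : ∀ u ∈ Icc (0:ℝ) 1, ∀ v ∈ Icc (0:ℝ) 1, MarkovProduct C C u v = C u v)
    {w : ℝ} (hw : w ∈ Icc (0:ℝ) 1) :
    ∫ t in (0:ℝ)..1, deriv (e1 C w) t = w := by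
  have h1 := hid 1 mem11 w hw
  rw [(hC.2.1 w hw).2] at h1
  have h2 : MarkovProduct C C 1 w = ∫ t in (0:ℝ)..1, deriv (e1 C w) t := by
    unfold MarkovProduct
    apply intervalIntegral.integral_congr_ae
    filter_upwards [ae_Ioo] with t ht hmem
    have htoo := ht hmem
    have hd1 : deriv (fun s => C 1 s) t = 1 := by
      have he : (fun s => C 1 s) =ᶠ[nhds t] (fun s => s) := by
        have hm : Ioo (0:ℝ) 1 ∈ nhds t := isOpen_Ioo.mem_nhds htoo
        filter_upwards [hm] with s hs
        exact (hC.2.1 s ⟨hs.1.le, hs.2.le⟩).2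
      rw [he.deriv_eq, deriv_id'']
    rw [e1_deriv_eq C w htoo, hd1, one_mul]
  rw [← h2, h1]

/-- FTC in the second variable. -/
lemma ftc2 (hC : IsCopula C)
    (hid : ∀ u ∈ Icc (0:ℝ) 1, ∀ v ∈ Icc (0:ℝ) 1, MarkovProduct C C u v = C u v)
    {u : ℝ} (hu : u ∈ Icc (0:ℝ) 1) {x : ℝ} (hx : x ∈ Icc (0:ℝ) 1) :
    ∫ t in (0:ℝ)..x, deriv (e2 C u) t = C u x := by
  have hA : ∫ t in (0:ℝ)..x, deriv (e2 C u) t ≤ C u x := by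
    have := integral_deriv_le_of_mono_cont (e2_mono hC hu) (e2_cont hC hu) hx.1
    have e0 : e2 C u 0 = 0 := by
      show C u (cl 0) = 0
      rw [cl_of_mem mem01]; exact (hC.1 u hu).1
    have ex : e2 C u x = C u x := by show C u (cl x) = C u x; rw [cl_of_mem hx]
    rw [e0, ex, sub_zero] at this
    exact this
  have hB : ∫ t in x..(1:ℝ), deriv (e2 C u) t ≤ u - C u x := by
    have := integral_deriv_le_of_mono_cont (e2_mono hC hu) (e2_cont hC hu) hx.2
    have e1' : e2 C u 1 = u := by
      show C u (cl 1) = u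
      rw [cl_of_mem mem11]; exact (hC.1 u hu).2
    have ex : e2 C u x = C u x := by show C u (cl x) = C u x; rw [cl_of_mem hx]
    rw [e1', ex] at this
    exact this
  have hadd : (∫ t in (0:ℝ)..x, deriv (e2 C u) t) + ∫ t in x..(1:ℝ), deriv (e2 C u) t = u := by
    rw [intervalIntegral.integral_add_adjacent_intervals (deriv_e2_ii hC hu 0 x)
      (deriv_e2_ii hC hu x 1)]
    exact int_e2_total hC hid hu
  linarith

/-- FTC in the first variable. -/
lemma ftc1 (hC : IsCopula C)
    (hid : ∀ u ∈ Icc (0:ℝ) 1, ∀ v ∈ Icc (0:ℝ) 1, MarkovProduct C C u v = C u v)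
    {w : ℝ} (hw : w ∈ Icc (0:ℝ) 1) {x : ℝ} (hx : x ∈ Icc (0:ℝ) 1) :
    ∫ t in (0:ℝ)..x, deriv (e1 C w) t = C x w := by
  have hA : ∫ t in (0:ℝ)..x, deriv (e1 C w) t ≤ C x w := by
    have := integral_deriv_le_of_mono_cont (e1_mono hC hw) (e1_cont hC hw) hx.1
    have e0 : e1 C w 0 = 0 := by
      show C (cl 0) w = 0
      rw [cl_of_mem mem01]; exact (hC.2.1 w hw).1
    have ex : e1 C w x = C x w := by show C (cl x) w = C x w; rw [cl_of_mem hx]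
    rw [e0, ex, sub_zero] at this
    exact this
  have hB : ∫ t in x..(1:ℝ), deriv (e1 C w) t ≤ w - C x w := by
    have := integral_deriv_le_of_mono_cont (e1_mono hC hw) (e1_cont hC hw) hx.2
    have e1' : e1 C w 1 = w := by
      show C (cl 1) w = w
      rw [cl_of_mem mem11]; exact (hC.2.1 w hw).2
    have ex : e1 C w x = C x w := by show C (cl x) w = C x w; rw [cl_of_mem hx]
    rw [e1', ex] at this
    exact this
  have hadd : (∫ t in (0:ℝ)..x, deriv (e1 C w) t) + ∫ t in x..(1:ℝ), deriv (e1 C w) t = w := by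
    rw [intervalIntegral.integral_add_adjacent_intervals (deriv_e1_ii hC hw 0 x)
      (deriv_e1_ii hC hw x 1)]
    exact int_e1_total hC hid hw
  linarith

/-- FTC differences -/
lemma ftc2_sub (hC : IsCopula C)
    (hid : ∀ u ∈ Icc (0:ℝ) 1, ∀ v ∈ Icc (0:ℝ) 1, MarkovProduct C C u v = C u v)
    {u : ℝ} (hu : u ∈ Icc (0:ℝ) 1) {x y : ℝ} (hx : x ∈ Icc (0:ℝ) 1) (hy : y ∈ Icc (0:ℝ) 1) :
    ∫ t in y..x, deriv (e2 C u) t = C u x - C u y := by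
  have h1 := ftc2 hC hid hu hx
  have h2 := ftc2 hC hid hu hy
  have := intervalIntegral.integral_add_adjacent_intervals (deriv_e2_ii hC hu 0 y)
      (deriv_e2_ii hC hu y x)
  rw [h2] at this
  rw [← h1, ← this]
  ring

lemma ftc1_sub (hC : IsCopula C)
    (hid : ∀ u ∈ Icc (0:ℝ) 1, ∀ v ∈ Icc (0:ℝ) 1, MarkovProduct C C u v = C u v)
    {w : ℝ} (hw : w ∈ Icc (0:ℝ) 1) {x y : ℝ} (hx : x ∈ Icc (0:ℝ) 1) (hy : y ∈ Icc (0:ℝ) 1) :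
    ∫ t in y..x, deriv (e1 C w) t = C x w - C y w := by
  have h1 := ftc1 hC hid hw hx
  have h2 := ftc1 hC hid hw hy
  have := intervalIntegral.integral_add_adjacent_intervals (deriv_e1_ii hC hw 0 y)
      (deriv_e1_ii hC hw y x)
  rw [h2] at this
  rw [← h1, ← this]
  ring

/-- restated idempotence -/
lemma hid' (hC : IsCopula C)
    (hid : ∀ u ∈ Icc (0:ℝ) 1, ∀ v ∈ Icc (0:ℝ) 1, MarkovProduct C C u v = C u v)
    {u v : ℝ} (hu : u ∈ Icc (0:ℝ) 1) (hv : v ∈ Icc (0:ℝ) 1) :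
    ∫ t in (0:ℝ)..1, deriv (e2 C u) t * deriv (e1 C v) t = C u v := by
  rw [← markov_eq hC u v]
  exact hid u hu v hv

end CopAux
namespace CopAux

variable {C : ℝ → ℝ → ℝ}

lemma ae_ne (c : ℝ) : ∀ᵐ t : ℝ, t ≠ c := by
  have h : (volume : Measure ℝ) {c} = 0 := measure_singleton c
  rw [← MeasureTheory.compl_mem_ae_iff] at h
  filter_upwards [h] with t ht
  simpa using ht

lemma e1_concave (hSI : ∀ v ∈ Icc (0:ℝ) 1, ConcaveOn ℝ (Icc (0:ℝ) 1) (fun u => C u v))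
    {w : ℝ} (hw : w ∈ Icc (0:ℝ) 1) :
    ConcaveOn ℝ (Icc (0:ℝ) 1) (e1 C w) := by
  refine ⟨convex_Icc 0 1, ?_⟩
  intro x hx y hy a b ha hb hab
  have hmem := (convex_Icc (0:ℝ) 1) hx hy ha hb hab
  have h := (hSI w hw).2 hx hy ha hb hab
  simpa only [e1, cl_of_mem hx, cl_of_mem hy, cl_of_mem hmem] using h

lemma concave_slope_le_deriv {f : ℝ → ℝ} (hcc : ConcaveOn ℝ (Icc (0:ℝ) 1) f) {x y : ℝ}
    (hx : x ∈ Icc (0:ℝ) 1) (hy : y ∈ Icc (0:ℝ) 1) (hxy : x < y)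
    (hd : DifferentiableAt ℝ f x) : slope f x y ≤ deriv f x := by
  have hcv : ConvexOn ℝ (Icc (0:ℝ) 1) (-f) := hcc.neg
  have h2 := hcv.deriv_le_slope hx hy hxy hd.neg
  have e1 : deriv (-f) x = -deriv f x := by
    rw [show (-f : ℝ → ℝ) = (fun z => -(f z)) from rfl]
    exact deriv.neg
  have e2 : slope (-f) x y = -slope f x y := by
    simp only [slope_def_field, Pi.neg_apply]
    ring
  rw [e1, e2] at h2
  linarith

lemma concave_deriv_le_slope {f : ℝ → ℝ} (hcc : ConcaveOn ℝ (Icc (0:ℝ) 1) f) {x y : ℝ}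
    (hx : x ∈ Icc (0:ℝ) 1) (hy : y ∈ Icc (0:ℝ) 1) (hxy : x < y)
    (hd : DifferentiableAt ℝ f y) : deriv f y ≤ slope f x y := by
  have hcv : ConvexOn ℝ (Icc (0:ℝ) 1) (-f) := hcc.neg
  have h2 := hcv.slope_le_deriv hx hy hxy hd.neg
  have e1 : deriv (-f) y = -deriv f y := by
    rw [show (-f : ℝ → ℝ) = (fun z => -(f z)) from rfl]
    exact deriv.neg
  have e2 : slope (-f) x y = -slope f x y := by
    simp only [slope_def_field, Pi.neg_apply]
    ring
  rw [e1, e2] at h2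
  linarith

/-- derivative of a monotone antitone-derivative (concave) function at two points -/
lemma concave_deriv_anti {f : ℝ → ℝ} (hcc : ConcaveOn ℝ (Icc (0:ℝ) 1) f) {x y : ℝ}
    (hx : x ∈ Icc (0:ℝ) 1) (hy : y ∈ Icc (0:ℝ) 1) (hxy : x < y)
    (hdx : DifferentiableAt ℝ f x) (hdy : DifferentiableAt ℝ f y) :
    deriv f y ≤ deriv f x :=
  (concave_deriv_le_slope hcc hx hy hxy hdy).trans (concave_slope_le_deriv hcc hx hy hxy hdx)

end CopAux
namespace CopAux

variable {C : ℝ → ℝ → ℝ}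

/-- Key analytic lemma: for every `w` and every `z` with `C z z < z`,
the map `x ↦ C x w` is affine on `[C z z, z]`. -/
lemma affine_block (hC : IsCopula C)
    (hid : ∀ u ∈ Icc (0:ℝ) 1, ∀ v ∈ Icc (0:ℝ) 1, MarkovProduct C C u v = C u v)
    (hSI : ∀ v ∈ Icc (0:ℝ) 1, ConcaveOn ℝ (Icc (0:ℝ) 1) (fun u => C u v))
    {w : ℝ} (hw : w ∈ Icc (0:ℝ) 1) {z : ℝ} (hz : z ∈ Ioo (0:ℝ) 1)
    {x : ℝ} (hx : x ∈ Icc (C z z) z) :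
    (z - C z z) * C x w = (z - x) * C (C z z) w + (x - C z z) * C z w := by
  have hzI : z ∈ Icc (0:ℝ) 1 := ⟨hz.1.le, hz.2.le⟩
  set d := C z z with hd
  have hdI : d ∈ Icc (0:ℝ) 1 := mem_Icc01 hC hzI hzI
  have hdlez : d ≤ z := le_snd hC hzI hzI
  rcases eq_or_lt_of_le hdlez with heq | hdz
  · have hxz : x = z := le_antisymm hx.2 (heq ▸ hx.1)
    rw [hxz, ← heq]
    ring
  -- main case : d < z
  have hxI : x ∈ Icc (0:ℝ) 1 := ⟨hdI.1.trans hx.1, hx.2.trans hzI.2⟩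
  have hcc : ConcaveOn ℝ (Icc (0:ℝ) 1) (e1 C w) := e1_concave hSI hw
  -- the infimum of left slopes at z
  set SL : Set ℝ := (fun y => (C z w - C y w) / (z - y)) '' Ico 0 z with hSL
  have hSLne : SL.Nonempty := ⟨_, mem_image_of_mem _ (⟨le_refl 0, hz.1⟩ : (0:ℝ) ∈ Ico 0 z)⟩
  have hSLlb : ∀ s ∈ SL, (0:ℝ) ≤ s := by
    rintro s ⟨y, hy, rfl⟩
    have hyI : y ∈ Icc (0:ℝ) 1 := ⟨hy.1, hy.2.le.trans hzI.2⟩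
    have h1 : C y w ≤ C z w := mono1 hC hw hyI hzI hy.2.le
    have h2 : (0:ℝ) < z - y := by linarith [hy.2]
    exact div_nonneg (by linarith) h2.le
  have hSLbdd : BddBelow SL := ⟨0, hSLlb⟩
  set L := sInf SL with hL
  have hL0 : 0 ≤ L := le_csInf hSLne hSLlb
  have hL1 : L ≤ 1 := by
    have h0 : (0:ℝ) ∈ Ico (0:ℝ) z := ⟨le_refl 0, hz.1⟩
    have hmem : (C z w - C 0 w) / (z - 0) ∈ SL := mem_image_of_mem _ h0
    have hle : (C z w - C 0 w) / (z - 0) ≤ 1 := by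
      rw [(hC.2.1 w hw).1, sub_zero, sub_zero, div_le_one hz.1]
      exact le_fst hC hzI hw
    exact (csInf_le hSLbdd hmem).trans hle
  have hLle : ∀ y ∈ Ico (0:ℝ) z, L ≤ (C z w - C y w) / (z - y) := fun y hy =>
    csInf_le hSLbdd (mem_image_of_mem _ hy)
  -- upper bound : right slopes at z are ≤ L
  have hub : ∀ y ∈ Ioo z (1:ℝ), (C y w - C z w) / (y - z) ≤ L := by
    intro y hy
    apply le_csInf hSLne
    rintro s ⟨y', hy', rfl⟩
    have hy'I : y' ∈ Icc (0:ℝ) 1 := ⟨hy'.1, hy'.2.le.trans hzI.2⟩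
    have hyI : y ∈ Icc (0:ℝ) 1 := ⟨hz.1.le.trans hy.1.le, hy.2.le⟩
    have hcv : ConvexOn ℝ (Icc (0:ℝ) 1) (-(e1 C w)) := hcc.neg
    have hsec := hcv.secant_mono hzI hy'I hyI (ne_of_lt hy'.2) (ne_of_gt hy.1)
      (hy'.2.le.trans hy.1.le)
    have hval : ∀ t ∈ Icc (0:ℝ) 1, (-(e1 C w)) t = -(C t w) := by
      intro t ht
      simp only [Pi.neg_apply, e1, cl_of_mem ht]
    rw [hval y' hy'I, hval y hyI, hval z hzI] at hsec
    have h1 : (-(C y' w) - -(C z w)) / (y' - z) = -((C z w - C y' w) / (z - y')) := by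
      rw [show y' - z = -(z - y') by ring, div_neg]
      ring_nf
    have h2 : (-(C y w) - -(C z w)) / (y - z) = -((C y w - C z w) / (y - z)) := by
      rw [← neg_div]
      ring_nf
    rw [h1, h2] at hsec
    linarith
  -- pointwise derivative bounds at differentiability points
  have h_ge : ∀ t ∈ Ioo (0:ℝ) z, DifferentiableAt ℝ (e1 C w) t →
      L ≤ deriv (e1 C w) t := by
    intro t ht hdiff
    have htI : t ∈ Icc (0:ℝ) 1 := ⟨ht.1.le, ht.2.le.trans hzI.2⟩
    have hs := concave_slope_le_deriv hcc htI hzI ht.2 hdiff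
    have hsl : slope (e1 C w) t z = (C z w - C t w) / (z - t) := by
      rw [slope_def_field]
      simp only [e1, cl_of_mem htI, cl_of_mem hzI]
    rw [hsl] at hs
    exact (hLle t ⟨ht.1.le, ht.2⟩).trans hs
  have h_le : ∀ t ∈ Ioo z (1:ℝ), DifferentiableAt ℝ (e1 C w) t →
      deriv (e1 C w) t ≤ L := by
    intro t ht hdiff
    have htI : t ∈ Icc (0:ℝ) 1 := ⟨hz.1.le.trans ht.1.le, ht.2.le⟩
    have hs := concave_deriv_le_slope hcc hzI htI ht.1 hdiff
    have hsl : slope (e1 C w) z t = (C t w - C z w) / (t - z) := by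
      rw [slope_def_field]
      simp only [e1, cl_of_mem htI, cl_of_mem hzI]
    rw [hsl] at hs
    exact hs.trans (hub t ht)
  -- integrals
  have hD : ∀ᵐ t : ℝ, DifferentiableAt ℝ (e1 C w) t := (e1_mono hC hw).ae_differentiableAt
  have iiH : ∀ a b : ℝ, IntervalIntegrable (deriv (e1 C w)) volume a b := deriv_e1_ii hC hw
  have iiG : ∀ a b : ℝ, IntervalIntegrable (deriv (e2 C z)) volume a b := deriv_e2_ii hC hzI
  have hHmem : ∀ t, deriv (e1 C w) t ∈ Icc (0:ℝ) 1 := e1_deriv_mem hC hw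
  have hGmem : ∀ t, deriv (e2 C z) t ∈ Icc (0:ℝ) 1 := e2_deriv_mem hC hzI
  have iiHG : ∀ a b : ℝ, IntervalIntegrable
      (fun t => deriv (e1 C w) t * deriv (e2 C z) t) volume a b := by
    intro a b
    apply ii_of_meas_bdd ((measurable_deriv _).mul (measurable_deriv _))
    intro t
    simp only [Pi.mul_apply, Pi.sub_apply]
    rw [abs_mul]
    calc |deriv (e1 C w) t| * |deriv (e2 C z) t|
        ≤ 1 * 1 := by
          apply mul_le_mul
          · rw [abs_le]; exact ⟨by linarith [(hHmem t).1], (hHmem t).2⟩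
          · rw [abs_le]; exact ⟨by linarith [(hGmem t).1], (hGmem t).2⟩
          · exact abs_nonneg _
          · norm_num
      _ = 1 := by norm_num
  have iiH1G : ∀ a b : ℝ, IntervalIntegrable
      (fun t => deriv (e1 C w) t * (1 - deriv (e2 C z) t)) volume a b := by
    intro a b
    apply ii_of_meas_bdd ((measurable_deriv _).mul (measurable_const.sub (measurable_deriv _)))
    intro t
    simp only [Pi.mul_apply, Pi.sub_apply]
    rw [abs_mul]
    calc |deriv (e1 C w) t| * |1 - deriv (e2 C z) t|
        ≤ 1 * 1 := by
          apply mul_le_mul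
          · rw [abs_le]; exact ⟨by linarith [(hHmem t).1], (hHmem t).2⟩
          · rw [abs_le]; constructor <;> [linarith [(hGmem t).2]; linarith [(hGmem t).1]]
          · exact abs_nonneg _
          · norm_num
      _ = 1 := by norm_num
  have iiLG : ∀ a b : ℝ, IntervalIntegrable
      (fun t => L * (1 - deriv (e2 C z) t)) volume a b := by
    intro a b
    apply ii_of_meas_bdd (measurable_const.mul (measurable_const.sub (measurable_deriv _)))
    intro t
    simp only [Pi.mul_apply, Pi.sub_apply]
    rw [abs_mul]
    calc |L| * |1 - deriv (e2 C z) t|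
        ≤ 1 * 1 := by
          apply mul_le_mul
          · rw [abs_le]; exact ⟨by linarith, hL1⟩
          · rw [abs_le]; constructor <;> [linarith [(hGmem t).2]; linarith [(hGmem t).1]]
          · exact abs_nonneg _
          · norm_num
      _ = 1 := by norm_num
  have iiLGmul : ∀ a b : ℝ, IntervalIntegrable
      (fun t => L * deriv (e2 C z) t) volume a b := by
    intro a b
    apply ii_of_meas_bdd (measurable_const.mul (measurable_deriv _))
    intro t
    simp only [Pi.mul_apply, Pi.sub_apply]
    rw [abs_mul]
    calc |L| * |deriv (e2 C z) t|
        ≤ 1 * 1 := by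
          apply mul_le_mul
          · rw [abs_le]; exact ⟨by linarith, hL1⟩
          · rw [abs_le]; exact ⟨by linarith [(hGmem t).1], (hGmem t).2⟩
          · exact abs_nonneg _
          · norm_num
      _ = 1 := by norm_num
  -- basic integral identities
  have hIzg : ∫ t in (0:ℝ)..z, deriv (e2 C z) t = d := ftc2 hC hid hzI hzI
  have hI1g : ∫ t in (0:ℝ)..1, deriv (e2 C z) t = z := int_e2_total hC hid hzI
  have hIzh : ∫ t in (0:ℝ)..z, deriv (e1 C w) t = C z w := ftc1 hC hid hw hzI
  have hMain : ∫ t in (0:ℝ)..1, deriv (e1 C w) t * deriv (e2 C z) t = C z w := by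
    have h := hid' hC hid hzI hw
    rw [← h]
    apply intervalIntegral.integral_congr
    intro t _
    exact mul_comm _ _
  have hXa : ∫ t in (0:ℝ)..z, (1 - deriv (e2 C z) t) = z - d := by
    have h1 : ∫ t in (0:ℝ)..z, (1:ℝ) = z := by simp
    rw [intervalIntegral.integral_sub intervalIntegrable_const (iiG 0 z), h1, hIzg]
  have hXb : ∫ t in z..(1:ℝ), deriv (e2 C z) t = z - d := by
    have := intervalIntegral.integral_add_adjacent_intervals (iiG 0 z) (iiG z 1)
    rw [hIzg, hI1g] at this
    linarith
  have hsplit : (∫ t in (0:ℝ)..z, deriv (e1 C w) t * deriv (e2 C z) t)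
      + ∫ t in z..(1:ℝ), deriv (e1 C w) t * deriv (e2 C z) t = C z w := by
    rw [intervalIntegral.integral_add_adjacent_intervals (iiHG 0 z) (iiHG z 1)]
    exact hMain
  have hA : ∫ t in (0:ℝ)..z, deriv (e1 C w) t * (1 - deriv (e2 C z) t)
      = C z w - ∫ t in (0:ℝ)..z, deriv (e1 C w) t * deriv (e2 C z) t := by
    have hcongr : ∫ t in (0:ℝ)..z, deriv (e1 C w) t * (1 - deriv (e2 C z) t)
        = ∫ t in (0:ℝ)..z,
            (deriv (e1 C w) t - deriv (e1 C w) t * deriv (e2 C z) t) := by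
      apply intervalIntegral.integral_congr
      intro t _
      ring
    rw [hcongr, intervalIntegral.integral_sub (iiH 0 z) (iiHG 0 z), hIzh]
  -- upper bound on the right piece
  have hBle : ∫ t in z..(1:ℝ), deriv (e1 C w) t * deriv (e2 C z) t ≤ L * (z - d) := by
    have hmono : ∫ t in z..(1:ℝ), deriv (e1 C w) t * deriv (e2 C z) t
        ≤ ∫ t in z..(1:ℝ), L * deriv (e2 C z) t := by
      apply intervalIntegral.integral_mono_ae_restrict hz.2.le (iiHG z 1) (iiLGmul z 1)
      have hsub : ∀ᵐ t : ℝ, t ∈ Icc z (1:ℝ) →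
          deriv (e1 C w) t * deriv (e2 C z) t ≤ L * deriv (e2 C z) t := by
        filter_upwards [hD, ae_ne z, ae_ne (1:ℝ)] with t hdiff hne hne1 hmem
        have htoo : t ∈ Ioo z (1:ℝ) :=
          ⟨lt_of_le_of_ne hmem.1 (Ne.symm hne), lt_of_le_of_ne hmem.2 hne1⟩
        have h1 := h_le t htoo hdiff
        have h2 := (hGmem t).1
        nlinarith
      exact (MeasureTheory.ae_restrict_iff'
        measurableSet_Icc).mpr hsub
    have heq : ∫ t in z..(1:ℝ), L * deriv (e2 C z) t = L * (z - d) := by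
      rw [intervalIntegral.integral_const_mul, hXb]
    linarith
  -- lower bound on the left piece
  have hAge : L * (z - d) ≤ ∫ t in (0:ℝ)..z, deriv (e1 C w) t * (1 - deriv (e2 C z) t) := by
    have hmono : ∫ t in (0:ℝ)..z, L * (1 - deriv (e2 C z) t)
        ≤ ∫ t in (0:ℝ)..z, deriv (e1 C w) t * (1 - deriv (e2 C z) t) := by
      apply intervalIntegral.integral_mono_ae_restrict hz.1.le (iiLG 0 z) (iiH1G 0 z)
      have hsub : ∀ᵐ t : ℝ, t ∈ Icc (0:ℝ) z →
          L * (1 - deriv (e2 C z) t) ≤ deriv (e1 C w) t * (1 - deriv (e2 C z) t) := by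
        filter_upwards [hD, ae_ne (0:ℝ), ae_ne z] with t hdiff hne0 hnez hmem
        have htoo : t ∈ Ioo (0:ℝ) z :=
          ⟨lt_of_le_of_ne hmem.1 (Ne.symm hne0), lt_of_le_of_ne hmem.2 hnez⟩
        have h1 := h_ge t htoo hdiff
        have h2 := (hGmem t).2
        nlinarith
      exact (MeasureTheory.ae_restrict_iff' measurableSet_Icc).mpr hsub
    have heq : ∫ t in (0:ℝ)..z, L * (1 - deriv (e2 C z) t) = L * (z - d) := by
      rw [intervalIntegral.integral_const_mul, hXa]
    linarith
  -- equalities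
  have hABeq : ∫ t in (0:ℝ)..z, deriv (e1 C w) t * (1 - deriv (e2 C z) t) = L * (z - d) := by
    have h1 : ∫ t in (0:ℝ)..z, deriv (e1 C w) t * (1 - deriv (e2 C z) t)
        = ∫ t in z..(1:ℝ), deriv (e1 C w) t * deriv (e2 C z) t := by
      rw [hA]
      linarith [hsplit]
    linarith [hBle, hAge, h1]
  -- integrability of the combined integrand
  have iiComb : ∀ a b : ℝ, IntervalIntegrable
      (fun t => (deriv (e1 C w) t - L) * (1 - deriv (e2 C z) t)) volume a b := by
    intro a b
    apply ii_of_meas_bdd (((measurable_deriv _).sub measurable_const).mul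
      (measurable_const.sub (measurable_deriv _)))
    intro t
    simp only [Pi.mul_apply, Pi.sub_apply]
    rw [abs_mul]
    calc |deriv (e1 C w) t - L| * |1 - deriv (e2 C z) t|
        ≤ 1 * 1 := by
          apply mul_le_mul
          · rw [abs_le]
            constructor
            · linarith [(hHmem t).1]
            · linarith [(hHmem t).2]
          · rw [abs_le]
            constructor
            · linarith [(hGmem t).2]
            · linarith [(hGmem t).1]
          · exact abs_nonneg _
          · norm_num
      _ = 1 := by norm_num
  -- the nonneg integrand with zero integral
  have hzero : ∫ t in (0:ℝ)..z, ((deriv (e1 C w) t - L) * (1 - deriv (e2 C z) t)) = 0 := by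
    have hcongr : ∫ t in (0:ℝ)..z, ((deriv (e1 C w) t - L) * (1 - deriv (e2 C z) t))
        = ∫ t in (0:ℝ)..z, (deriv (e1 C w) t * (1 - deriv (e2 C z) t)
            - L * (1 - deriv (e2 C z) t)) := by
      apply intervalIntegral.integral_congr
      intro t _
      ring
    rw [hcongr, intervalIntegral.integral_sub (iiH1G 0 z) (iiLG 0 z), hABeq,
      intervalIntegral.integral_const_mul, hXa]
    ring
  have hae0 : ∀ᵐ t : ℝ, t ∈ Ioc (0:ℝ) z →
      (deriv (e1 C w) t - L) * (1 - deriv (e2 C z) t) = 0 := by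
    have hempty : Ioc z (0:ℝ) = ∅ := Ioc_eq_empty (not_lt.mpr hz.1.le)
    have hnn : 0 ≤ᵐ[volume.restrict (Ioc (0:ℝ) z ∪ Ioc z 0)]
        fun t => (deriv (e1 C w) t - L) * (1 - deriv (e2 C z) t) := by
      rw [hempty, union_empty]
      have hnn' : ∀ᵐ t ∂(volume.restrict (Ioc (0:ℝ) z)),
          0 ≤ (deriv (e1 C w) t - L) * (1 - deriv (e2 C z) t) := by
        rw [MeasureTheory.ae_restrict_iff' measurableSet_Ioc]
        filter_upwards [hD, ae_ne z] with t hdiff hnez hmem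
        have htoo : t ∈ Ioo (0:ℝ) z := ⟨hmem.1, lt_of_le_of_ne hmem.2 hnez⟩
        have h1 := h_ge t htoo hdiff
        have h2 := (hGmem t).2
        exact mul_nonneg (by linarith : (0:ℝ) ≤ deriv (e1 C w) t - L)
          (by linarith : (0:ℝ) ≤ 1 - deriv (e2 C z) t)
      exact hnn'
    have hres := (intervalIntegral.integral_eq_zero_iff_of_nonneg_ae hnn (iiComb 0 z)).mp hzero
    rw [hempty, union_empty] at hres
    have hres' : ∀ᵐ t ∂(volume.restrict (Ioc (0:ℝ) z)),
        (deriv (e1 C w) t - L) * (1 - deriv (e2 C z) t) = 0 := by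
      filter_upwards [hres] with t ht
      simpa using ht
    have hres2 := (MeasureTheory.ae_restrict_iff' measurableSet_Ioc).mp hres'
    filter_upwards [hres2] with t h hmem
    exact h hmem
  -- the exceptional set E
  set E := Ioo (0:ℝ) z ∩ {t : ℝ | L < deriv (e1 C w) t} with hE
  have hEmeas : MeasurableSet E :=
    measurableSet_Ioo.inter (measurableSet_lt measurable_const (measurable_deriv _))
  have hEfin : volume E ≠ ⊤ := by
    have hsub : E ⊆ Ioo (0:ℝ) z := inter_subset_left
    exact ((measure_mono hsub).trans_lt measure_Ioo_lt_top).ne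
  have hgE : ∀ᵐ t : ℝ, t ∈ E → deriv (e2 C z) t = 1 := by
    filter_upwards [hae0] with t h ht
    have h0 := h ⟨ht.1.1, ht.1.2.le⟩
    rcases mul_eq_zero.mp h0 with h1 | h1
    · exfalso
      have := ht.2
      simp only [mem_setOf_eq] at this
      linarith
    · linarith
  have hvolE : (volume E).toReal ≤ d := by
    have h1 : ∫ t in E, deriv (e2 C z) t = (volume E).toReal := by
      have he : ∫ t in E, deriv (e2 C z) t = ∫ t in E, (1:ℝ) :=
        setIntegral_congr_ae hEmeas (by filter_upwards [hgE] with t h ht; exact h ht)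
      rw [he, setIntegral_const]
      simp
      rfl
    have h2 : ∫ t in E, deriv (e2 C z) t ≤ ∫ t in Ioc (0:ℝ) z, deriv (e2 C z) t := by
      apply setIntegral_mono_set (iiG 0 z).1
      · exact Filter.Eventually.of_forall fun t => (hGmem t).1
      · exact HasSubset.Subset.eventuallyLE
          ((inter_subset_left).trans Ioo_subset_Ioc_self)
    have h3 : ∫ t in Ioc (0:ℝ) z, deriv (e2 C z) t = d := by
      rw [← intervalIntegral.integral_of_le hz.1.le]
      exact hIzg
    linarith
  have hEpt : ∀ t ∈ E, t ≤ d := by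
    intro t ht
    have htD : DifferentiableAt ℝ (e1 C w) t := by
      by_contra hnd
      have := ht.2
      simp only [mem_setOf_eq, deriv_zero_of_not_differentiableAt hnd] at this
      linarith
    have htI : t ∈ Icc (0:ℝ) 1 := ⟨ht.1.1.le, ht.1.2.le.trans hzI.2⟩
    have hsub : Ioo (0:ℝ) t ∩ {s : ℝ | DifferentiableAt ℝ (e1 C w) s} ⊆ E := by
      rintro y ⟨hyIoo, hyD⟩
      have hyI : y ∈ Icc (0:ℝ) 1 := ⟨hyIoo.1.le, hyIoo.2.le.trans htI.2⟩
      have hanti := concave_deriv_anti hcc hyI htI hyIoo.2 hyD htD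
      refine ⟨⟨hyIoo.1, hyIoo.2.trans ht.1.2⟩, ?_⟩
      simp only [mem_setOf_eq]
      have := ht.2
      simp only [mem_setOf_eq] at this
      linarith
    have hvol1 : volume (Ioo (0:ℝ) t) ≤ volume E := by
      have hN : volume {s : ℝ | ¬ DifferentiableAt ℝ (e1 C w) s} = 0 :=
        MeasureTheory.ae_iff.mp hD
      have hinter : Ioo (0:ℝ) t ∩ {s : ℝ | DifferentiableAt ℝ (e1 C w) s}
          = Ioo (0:ℝ) t \ {s : ℝ | ¬ DifferentiableAt ℝ (e1 C w) s} := by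
        ext s
        simp [mem_diff, mem_inter_iff, not_not]
      calc volume (Ioo (0:ℝ) t)
          = volume (Ioo (0:ℝ) t ∩ {s : ℝ | DifferentiableAt ℝ (e1 C w) s}) := by
            rw [hinter, measure_diff_null hN]
        _ ≤ volume E := measure_mono hsub
    have h2 : volume (Ioo (0:ℝ) t) = ENNReal.ofReal t := by
      rw [Real.volume_Ioo, sub_zero]
    have h3 := ENNReal.toReal_mono hEfin hvol1
    rw [h2, ENNReal.toReal_ofReal ht.1.1.le] at h3
    linarith [hvolE]
  -- derivative equals L a.e. on (d, z)
  have hconst : ∀ᵐ t : ℝ, t ∈ Ioc d z → deriv (e1 C w) t = L := by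
    filter_upwards [hD, ae_ne z] with t hdiff hnez hmem
    have htoo : t ∈ Ioo d z := ⟨hmem.1, lt_of_le_of_ne hmem.2 hnez⟩
    have ht0z : t ∈ Ioo (0:ℝ) z := ⟨lt_of_le_of_lt hdI.1 htoo.1, htoo.2⟩
    have hge := h_ge t ht0z hdiff
    have hle : deriv (e1 C w) t ≤ L := by
      by_contra hlt
      push_neg at hlt
      have htE : t ∈ E := ⟨ht0z, hlt⟩
      linarith [hEpt t htE, htoo.1]
    linarith
  have hInt : ∫ t in d..z, deriv (e1 C w) t = L * (z - d) := by
    have he : ∫ t in d..z, deriv (e1 C w) t = ∫ t in d..z, L := by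
      apply intervalIntegral.integral_congr_ae
      filter_upwards [hconst] with t h hmem
      rw [Set.uIoc_of_le hdz.le] at hmem
      exact h hmem
    rw [he, intervalIntegral.integral_const, smul_eq_mul]
    ring
  have hCdz : C z w - C d w = L * (z - d) := by
    rw [← ftc1_sub hC hid hw hzI hdI]
    exact hInt
  -- conclusion
  rcases eq_or_lt_of_le hx.2 with hxz | hxz
  · rw [hxz]
    ring
  · have hx0 : (0:ℝ) ≤ x := hdI.1.trans hx.1
    have hupper : L * (z - x) ≤ C z w - C x w := by
      have h := hLle x ⟨hx0, hxz⟩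
      rw [le_div_iff₀ (by linarith : (0:ℝ) < z - x)] at h
      linarith
    have hzd : (0:ℝ) < z - d := by linarith
    have hlower : (z - x) / (z - d) * C d w + (x - d) / (z - d) * C z w ≤ C x w := by
      have ha : (0:ℝ) ≤ (z - x) / (z - d) := div_nonneg (by linarith) hzd.le
      have hb : (0:ℝ) ≤ (x - d) / (z - d) := div_nonneg (by linarith [hx.1]) hzd.le
      have hab : (z - x) / (z - d) + (x - d) / (z - d) = 1 := by
        field_simp
        ring
      have hcomb := (hSI w hw).2 hdI hzI ha hb hab
      simp only [smul_eq_mul] at hcomb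
      have hpt : (z - x) / (z - d) * d + (x - d) / (z - d) * z = x := by
        field_simp
        ring
      rw [hpt] at hcomb
      exact hcomb
    have hgoal_le : (z - x) * C d w + (x - d) * C z w ≤ (z - d) * C x w := by
      have h' := mul_le_mul_of_nonneg_left hlower hzd.le
      have e : (z - d) * ((z - x) / (z - d) * C d w + (x - d) / (z - d) * C z w)
          = (z - x) * C d w + (x - d) * C z w := by
        field_simp
      rw [e] at h'
      linarith
    have hgoal_ge : (z - d) * C x w ≤ (z - x) * C d w + (x - d) * C z w := by
      have hmul := mul_le_mul_of_nonneg_left hupper hzd.le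
      have key : (z - x) * C d w + (x - d) * C z w - (z - d) * C x w
          = (z - d) * (C z w - C x w) - (z - x) * (C z w - C d w) := by
        ring
      have key2 : (z - x) * (C z w - C d w) = (z - x) * (L * (z - d)) := by
        rw [hCdz]
      have e : (z - d) * (L * (z - x)) = (z - x) * (L * (z - d)) := by
        ring
      linarith
    linarith

end CopAux
namespace CopAux

variable {C : ℝ → ℝ → ℝ}

lemma diag_cont (hC : IsCopula C) : Continuous (fun x => C (cl x) (cl x)) := by
  have : LipschitzWith 2 (fun x => C (cl x) (cl x)) := by
    apply LipschitzWith.of_dist_le_mul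
    intro x y
    have key : ∀ p q : ℝ, p ≤ q → C (cl q) (cl q) - C (cl p) (cl p) ≤ 2 * (q - p) := by
      intro p q hpq
      have h1 := diag_lip hC (cl_mem p) (cl_mem q) (cl_mono hpq)
      have h2 := cl_lip hpq
      linarith
    have hmono : ∀ p q : ℝ, p ≤ q → C (cl p) (cl p) ≤ C (cl q) (cl q) := by
      intro p q hpq
      exact diag_mono hC (cl_mem p) (cl_mem q) (cl_mono hpq)
    rcases le_total x y with h | h
    · rw [Real.dist_eq, Real.dist_eq, abs_of_nonpos (by linarith [hmono x y h]),
        abs_of_nonpos (by linarith)]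
      have := key x y h
      push_cast
      linarith
    · rw [Real.dist_eq, Real.dist_eq, abs_of_nonneg (by linarith [hmono y x h]),
        abs_of_nonneg (by linarith)]
      have := key y x h
      push_cast
      linarith
  exact this.continuous

/-- Existence of the surrounding block with M-point endpoints and two-sided affinity. -/
lemma exists_block (hC : IsCopula C)
    (hid : ∀ u ∈ Icc (0:ℝ) 1, ∀ v ∈ Icc (0:ℝ) 1, MarkovProduct C C u v = C u v)
    (hSI : ∀ v ∈ Icc (0:ℝ) 1, ConcaveOn ℝ (Icc (0:ℝ) 1) (fun u => C u v))
    {v : ℝ} (hv : v ∈ Ioo (0:ℝ) 1) (hdv : C v v < v) :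
    ∃ a b : ℝ, 0 ≤ a ∧ a < v ∧ v < b ∧ b ≤ 1 ∧ C a a = a ∧ C b b = b ∧ a ≤ C v v ∧
      ∀ w ∈ Icc (0:ℝ) 1, ∀ x ∈ Icc a b,
        (b - a) * C x w = (b - x) * C a w + (x - a) * C b w := by
  have hvI : v ∈ Icc (0:ℝ) 1 := ⟨hv.1.le, hv.2.le⟩
  set φ := fun x => C (cl x) (cl x) with hφ
  have hφc : Continuous φ := diag_cont hC
  set F : Set ℝ := {x : ℝ | φ x = x} ∩ Icc 0 1 with hF
  have hFclosed : IsClosed F := (isClosed_eq hφc continuous_id).inter isClosed_Icc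
  have hmemF : ∀ x, x ∈ F ↔ (C x x = x ∧ x ∈ Icc (0:ℝ) 1) := by
    intro x
    constructor
    · rintro ⟨h1, h2⟩
      simp only [hφ, mem_setOf_eq, cl_of_mem h2] at h1
      exact ⟨h1, h2⟩
    · rintro ⟨h1, h2⟩
      refine ⟨?_, h2⟩
      show φ x = x
      simp only [hφ, cl_of_mem h2]
      exact h1
  have h0F : (0:ℝ) ∈ F := (hmemF 0).mpr ⟨(hC.2.1 0 mem01).1, mem01⟩
  have h1F : (1:ℝ) ∈ F := (hmemF 1).mpr ⟨(hC.2.1 1 mem11).2, mem11⟩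
  have hvF : v ∉ F := by
    intro hmem
    exact absurd ((hmemF v).mp hmem).1 (ne_of_lt hdv)
  -- a
  set Fa := F ∩ Icc 0 v with hFa
  have hFa_ne : Fa.Nonempty := ⟨0, h0F, ⟨le_refl 0, hv.1.le⟩⟩
  have hFa_bdd : BddAbove Fa := ⟨v, fun x hx => hx.2.2⟩
  have hFa_closed : IsClosed Fa := hFclosed.inter isClosed_Icc
  set a := sSup Fa with ha
  have haFa : a ∈ Fa := hFa_closed.csSup_mem hFa_ne hFa_bdd
  have haa : C a a = a := ((hmemF a).mp haFa.1).1
  have haI : a ∈ Icc (0:ℝ) 1 := ((hmemF a).mp haFa.1).2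
  have hav : a < v := lt_of_le_of_ne haFa.2.2 (fun h => hvF (h ▸ haFa.1))
  -- b
  set Fb := F ∩ Icc v 1 with hFb
  have hFb_ne : Fb.Nonempty := ⟨1, h1F, ⟨hv.2.le, le_refl 1⟩⟩
  have hFb_bdd : BddBelow Fb := ⟨v, fun x hx => hx.2.1⟩
  have hFb_closed : IsClosed Fb := hFclosed.inter isClosed_Icc
  set b := sInf Fb with hb
  have hbFb : b ∈ Fb := hFb_closed.csInf_mem hFb_ne hFb_bdd
  have hbb : C b b = b := ((hmemF b).mp hbFb.1).1
  have hbI : b ∈ Icc (0:ℝ) 1 := ((hmemF b).mp hbFb.1).2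
  have hvb : v < b := lt_of_le_of_ne hbFb.2.1 (fun h => hvF (h ▸ hbFb.1))
  have hab : a < b := hav.trans hvb
  -- no fixed points inside (a,b)
  have hgap : ∀ s ∈ Ioo a b, C s s < s := by
    intro s hs
    have hsI : s ∈ Icc (0:ℝ) 1 := ⟨haI.1.trans hs.1.le, hs.2.le.trans hbI.2⟩
    have hne : C s s ≠ s := by
      intro heq
      have hsF : s ∈ F := (hmemF s).mpr ⟨heq, hsI⟩
      rcases le_total s v with h | h
      · have : s ≤ a := le_csSup hFa_bdd ⟨hsF, ⟨hsI.1, h⟩⟩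
        linarith [hs.1]
      · have : b ≤ s := csInf_le hFb_bdd ⟨hsF, ⟨h, hsI.2⟩⟩
        linarith [hs.2]
    exact lt_of_le_of_ne (le_snd hC hsI hsI) hne
  have haCv : a ≤ C v v := by
    calc a = C a a := haa.symm
      _ ≤ C v v := diag_mono hC haI hvI hav.le
  refine ⟨a, b, haI.1, hav, hvb, hbI.2, haa, hbb, haCv, ?_⟩
  -- the affinity statement
  intro w hw x hx
  set G := fun y => (b - a) * e1 C w y - (b - y) * e1 C w a - (y - a) * e1 C w b with hG
  have hGcont : Continuous G := by
    apply Continuous.sub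
    apply Continuous.sub
    · exact continuous_const.mul (e1_cont hC hw)
    · exact (continuous_const.sub continuous_id).mul continuous_const
    · exact (continuous_id.sub continuous_const).mul continuous_const
  have hGa : G a = 0 := by simp only [hG]; ring
  have hGb : G b = 0 := by simp only [hG]; ring
  have hcc : ConcaveOn ℝ (Icc (0:ℝ) 1) (e1 C w) := e1_concave hSI hw
  have hGnonneg : ∀ y ∈ Icc a b, 0 ≤ G y := by
    intro y hy
    have hyI : y ∈ Icc (0:ℝ) 1 := ⟨haI.1.trans hy.1, hy.2.trans hbI.2⟩
    have hba : (0:ℝ) < b - a := by linarith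
    have hc1 : (0:ℝ) ≤ (b - y) / (b - a) := div_nonneg (by linarith [hy.2]) hba.le
    have hc2 : (0:ℝ) ≤ (y - a) / (b - a) := div_nonneg (by linarith [hy.1]) hba.le
    have hcab : (b - y) / (b - a) + (y - a) / (b - a) = 1 := by field_simp; ring
    have hcomb := hcc.2 haI hbI hc1 hc2 hcab
    simp only [smul_eq_mul] at hcomb
    have hpt : (b - y) / (b - a) * a + (y - a) / (b - a) * b = y := by
      field_simp
      ring
    rw [hpt] at hcomb
    have h' := mul_le_mul_of_nonneg_left hcomb hba.le
    have e : (b - a) * ((b - y) / (b - a) * e1 C w a + (y - a) / (b - a) * e1 C w b)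
        = (b - y) * e1 C w a + (y - a) * e1 C w b := by
      field_simp
    simp only [hG]
    nlinarith [h', e]
  -- maximum of G on [a,b]
  obtain ⟨y0, hy0mem, hy0max⟩ :=
    isCompact_Icc.exists_isMaxOn (nonempty_Icc.mpr hab.le) hGcont.continuousOn
  set M := G y0 with hM
  have hM0 : 0 ≤ M := hGnonneg y0 hy0mem
  have hMzero : M ≤ 0 := by
    by_contra hMpos
    push_neg at hMpos
    -- the set where the max is attained
    set T : Set ℝ := {y : ℝ | G y = M} ∩ Icc a b with hT
    have hTne : T.Nonempty := ⟨y0, rfl, hy0mem⟩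
    have hTbdd : BddAbove T := ⟨b, fun y hy => hy.2.2⟩
    have hTclosed : IsClosed T := (isClosed_eq hGcont continuous_const).inter isClosed_Icc
    set m := sSup T with hm
    have hmT : m ∈ T := hTclosed.csSup_mem hTne hTbdd
    have hGm : G m = M := hmT.1
    have hma : a < m := by
      rcases eq_or_lt_of_le hmT.2.1 with h | h
      · exfalso
        have hM0' : M = 0 := by rw [← hGm, ← h]; exact hGa
        linarith
      · exact h
    have hmb : m < b := by
      rcases eq_or_lt_of_le hmT.2.2 with h | h
      · exfalso
        have hM0' : M = 0 := by rw [← hGm, h]; exact hGb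
        linarith
      · exact h
    have hmI : m ∈ Icc (0:ℝ) 1 := ⟨haI.1.trans hma.le, hmb.le.trans hbI.2⟩
    have hdm : C m m < m := hgap m ⟨hma, hmb⟩
    -- choose z slightly above m
    set δ := min ((m - C m m) / 4) (min ((1 - m) / 2) ((b - m) / 2)) with hδ
    have hδpos : 0 < δ := by
      apply lt_min
      · linarith
      · apply lt_min
        · have : m < 1 := lt_of_lt_of_le hmb hbI.2
          linarith
        · linarith
    set z := m + δ with hz
    have hzm : m < z := by simp [hz]; linarith
    have hz1 : z < 1 := by
      have : δ ≤ (1 - m) / 2 := (min_le_right _ _).trans (min_le_left _ _)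
      simp only [hz]
      linarith
    have hzb : z < b := by
      have : δ ≤ (b - m) / 2 := (min_le_right _ _).trans (min_le_right _ _)
      simp only [hz]
      linarith
    have hzIoo : z ∈ Ioo (0:ℝ) 1 := ⟨lt_of_le_of_lt hmI.1 hzm, hz1⟩
    have hzI : z ∈ Icc (0:ℝ) 1 := ⟨hzIoo.1.le, hzIoo.2.le⟩
    have hCzz : C z z < m := by
      have h1 : C z z - C m m ≤ 2 * (z - m) := diag_lip hC hmI hzI hzm.le
      have h2 : z - m = δ := by simp [hz]
      have h3 : δ ≤ (m - C m m) / 4 := min_le_left _ _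
      linarith
    have hCzz_ge_a : a ≤ C z z := by
      calc a = C a a := haa.symm
        _ ≤ C z z := diag_mono hC haI hzI (hma.le.trans hzm.le)
    -- pick η
    set η := min (min ((m - C z z) / 2) ((z - m) / 2)) ((b - m) / 2) with hη
    have hηpos : 0 < η := by
      apply lt_min
      · apply lt_min
        · linarith
        · linarith
      · linarith
    set p := m - η with hp
    set q := m + η with hq
    have hpm : p < m := by simp [hp]; linarith
    have hmq : m < q := by simp [hq]; linarith
    have hpCzz : C z z < p := by
      have : η ≤ (m - C z z) / 2 := (min_le_left _ _).trans (min_le_left _ _)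
      simp only [hp]
      linarith
    have hqz : q < z := by
      have : η ≤ (z - m) / 2 := (min_le_left _ _).trans (min_le_right _ _)
      simp only [hq]
      linarith
    have hqb : q < b := by
      have : η ≤ (b - m) / 2 := min_le_right _ _
      simp only [hq]
      linarith
    have hpa : a < p := lt_of_le_of_lt hCzz_ge_a hpCzz
    -- affine identities from affine_block
    have hzz_lt_z : C z z < z := hCzz.trans hzm
    have habp := affine_block hC hid hSI hw hzIoo
      (x := p) ⟨hpCzz.le, (hpm.trans hzm).le⟩
    have habq := affine_block hC hid hSI hw hzIoo
      (x := q) ⟨(hCzz.trans hmq).le, hqz.le⟩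
    have habm := affine_block hC hid hSI hw hzIoo
      (x := m) ⟨hCzz.le, hzm.le⟩
    -- midpoint relation : C p w + C q w = 2 C m w
    have hmid : C p w + C q w = 2 * C m w := by
      have hpq : p + q = 2 * m := by simp only [hp, hq]; ring
      have hzd : (0:ℝ) < z - C z z := by linarith
      have hsum : (z - C z z) * (C p w + C q w - 2 * C m w) = 0 := by
        linear_combination habp + habq - 2 * habm + (C z w - C (C z z) w) * hpq
      have := mul_eq_zero.mp hsum
      rcases this with h | h
      · linarith
      · linarith
    -- midpoint relation for G
    have hpI : p ∈ Icc (0:ℝ) 1 := ⟨haI.1.trans hpa.le, (hpm.le.trans hmI.2)⟩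
    have hqI : q ∈ Icc (0:ℝ) 1 := ⟨hmI.1.trans hmq.le, hqz.le.trans hzI.2⟩
    have hGmid : G p + G q = 2 * G m := by
      simp only [hG, e1, cl_of_mem hpI, cl_of_mem hqI, cl_of_mem hmI]
      have hpq : p + q = 2 * m := by simp only [hp, hq]; ring
      linear_combination (b - a) * hmid + (C a w - C b w) * hpq
    have hGp : G p ≤ M := hy0max ⟨hpa.le, (hpm.trans (hmb)).le⟩
    have hGq : G q ≤ M := hy0max ⟨(hpa.trans (hpm.trans hmq)).le.trans (le_refl q), hqb.le⟩
    have hGqM : G q = M := by linarith [hGmid, hGp, hGq, hGm]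
    have : q ≤ m := le_csSup hTbdd ⟨hGqM, ⟨(hma.trans hmq).le, hqb.le⟩⟩
    linarith
  -- conclude : G ≡ 0 on [a,b]
  have hG0 : G x = 0 := le_antisymm ((hy0max hx).trans hMzero) (hGnonneg x hx)
  have hxI : x ∈ Icc (0:ℝ) 1 := ⟨haI.1.trans hx.1, hx.2.trans hbI.2⟩
  simp only [hG, e1, cl_of_mem hxI, cl_of_mem haI, cl_of_mem hbI] at hG0
  linarith [hG0]

end CopAux

open CopAux

theorem tangent_property (C : ℝ → ℝ → ℝ) (hC : IsCopula C)
    (hid : ∀ u ∈ Icc (0:ℝ) 1, ∀ v ∈ Icc (0:ℝ) 1, MarkovProduct C C u v = C u v)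
    (hSI : StochIncr C) :
    ∀ u ∈ Ioo (0:ℝ) 1, ∀ v ∈ Ioo (0:ℝ) 1,
      (v - C v v) * derivWithin (fun t => C u t) (Iic v) v
        = C u v - C u (C v v) := by
  intro u hu v hv
  have hSI' : ∀ w ∈ Icc (0:ℝ) 1, ConcaveOn ℝ (Icc (0:ℝ) 1) (fun x => C x w) := hSI
  have huI : u ∈ Icc (0:ℝ) 1 := ⟨hu.1.le, hu.2.le⟩
  have hvI : v ∈ Icc (0:ℝ) 1 := ⟨hv.1.le, hv.2.le⟩
  have hdle : C v v ≤ v := le_snd hC hvI hvI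
  rcases eq_or_lt_of_le hdle with heq | hdv
  · rw [heq]
    ring
  · obtain ⟨a, b, ha0, hav, hvb, hb1, haa, hbb, haCv, haff⟩ := exists_block hC hid hSI' hv hdv
    have haI : a ∈ Icc (0:ℝ) 1 := ⟨ha0, (hav.trans hv.2).le⟩
    have hbI : b ∈ Icc (0:ℝ) 1 := ⟨(hv.1.trans hvb).le, hb1⟩
    set d := C v v with hd
    have hdI : d ∈ Icc (0:ℝ) 1 := mem_Icc01 hC hvI hvI
    have hdb : d < b := hdv.trans hvb
    rcases le_or_gt u a with hua | hua
    · -- u ≤ a : C u · is constant on [a, 1]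
      have hconst : ∀ t, t ∈ Icc a 1 → C u t = C u a := by
        intro t ht
        have htI : t ∈ Icc (0:ℝ) 1 := ⟨ha0.trans ht.1, ht.2⟩
        have hCat : C a t = a := by
          rw [Mpoint_fst hC haI haa htI]
          exact min_eq_left ht.1
        have hrect := hC.2.2 u a a t huI haI haI htI hua ht.1
        rw [hCat, haa] at hrect
        have hm := mono2 hC huI haI htI ht.1
        linarith
      have hev : (fun t => C u t) =ᶠ[nhdsWithin v (Iic v)] (fun _ => C u a) := by
        have hIoi : Ioi a ∈ nhdsWithin v (Iic v) := nhdsWithin_le_nhds (Ioi_mem_nhds hav)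
        filter_upwards [hIoi, self_mem_nhdsWithin] with t hta htv
        exact hconst t ⟨le_of_lt hta, le_trans htv hv.2.le⟩
      have hdval : derivWithin (fun t => C u t) (Iic v) v = 0 := by
        rw [hev.derivWithin_eq (hconst v ⟨hav.le, hv.2.le⟩)]
        have hcd : HasDerivWithinAt (fun _ : ℝ => C u a) 0 (Iic v) v :=
          hasDerivWithinAt_const _ _ _
        exact hcd.derivWithin ((uniqueDiffOn_Iic v) v self_mem_Iic)
      rw [hdval]
      have h1 : C u v = C u a := hconst v ⟨hav.le, hv.2.le⟩
      have h2 : C u d = C u a := hconst d ⟨haCv, hdI.2⟩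
      rw [h1, h2]
      ring
    rcases le_or_gt b u with hbu | hbu
    · -- b ≤ u : C u t = t for t ≤ b
      have hident : ∀ t, t ∈ Icc (0:ℝ) 1 → t ≤ b → C u t = t := by
        intro t htI htb
        have hCbt : C b t = t := by
          rw [Mpoint_fst hC hbI hbb htI]
          exact min_eq_right htb
        have hm := mono1 hC htI hbI huI hbu
        rw [hCbt] at hm
        have := le_snd hC huI htI
        linarith
      have hev : (fun t => C u t) =ᶠ[nhdsWithin v (Iic v)] (fun t => t) := by
        have hIoo : Ioo (0:ℝ) b ∈ nhdsWithin v (Iic v) :=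
          nhdsWithin_le_nhds (Ioo_mem_nhds hv.1 hvb)
        filter_upwards [hIoo, self_mem_nhdsWithin] with t ht htv
        exact hident t ⟨ht.1.le, le_trans htv hv.2.le⟩ ht.2.le
      have hdval : derivWithin (fun t => C u t) (Iic v) v = 1 := by
        rw [hev.derivWithin_eq (hident v hvI hvb.le)]
        have hcd : HasDerivWithinAt (fun t : ℝ => t) 1 (Iic v) v := hasDerivWithinAt_id v (Iic v)
        exact hcd.derivWithin ((uniqueDiffOn_Iic v) v self_mem_Iic)
      rw [hdval]
      have h1 : C u v = v := hident v hvI hvb.le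
      have h2 : C u d = d := hident d hdI hdb.le
      rw [h1, h2]
      ring
    · -- a < u < b : affine formula
      have hba : (0:ℝ) < b - a := by linarith
      have haffu : ∀ t, t ∈ Icc a v → C u t = ((b - u) * a + (u - a) * t) / (b - a) := by
        intro t ht
        have htI : t ∈ Icc (0:ℝ) 1 := ⟨ha0.trans ht.1, ht.2.trans hv.2.le⟩
        have h := haff t htI u ⟨hua.le, hbu.le⟩
        have hCat : C a t = a := by
          rw [Mpoint_fst hC haI haa htI]
          exact min_eq_left ht.1
        have hCbt : C b t = t := by
          rw [Mpoint_fst hC hbI hbb htI]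
          exact min_eq_right (ht.2.trans hvb.le)
        rw [hCat, hCbt] at h
        field_simp
        linarith
      have hev : (fun t => C u t) =ᶠ[nhdsWithin v (Iic v)]
          (fun t => ((b - u) * a + (u - a) * t) / (b - a)) := by
        have hIoi : Ioi a ∈ nhdsWithin v (Iic v) := nhdsWithin_le_nhds (Ioi_mem_nhds hav)
        filter_upwards [hIoi, self_mem_nhdsWithin] with t hta htv
        exact haffu t ⟨le_of_lt hta, htv⟩
      have hdval : derivWithin (fun t => C u t) (Iic v) v = (u - a) / (b - a) := by
        rw [hev.derivWithin_eq (haffu v ⟨hav.le, le_refl v⟩)]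
        have hhd : HasDerivAt (fun t : ℝ => ((b - u) * a + (u - a) * t) / (b - a))
            ((u - a) / (b - a)) v := by
          have h1 : HasDerivAt (fun t : ℝ => (b - u) * a + (u - a) * t) (u - a) v := by
            simpa using ((hasDerivAt_id v).const_mul (u - a)).const_add ((b - u) * a)
          simpa using h1.div_const (b - a)
        exact hhd.hasDerivWithinAt.derivWithin ((uniqueDiffOn_Iic v) v self_mem_Iic)
      rw [hdval]
      have h1 : C u v = ((b - u) * a + (u - a) * v) / (b - a) := haffu v ⟨hav.le, le_refl v⟩
      have h2 : C u d = ((b - u) * a + (u - a) * d) / (b - a) := haffu d ⟨haCv, hdv.le⟩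
      rw [h1, h2]
      field_simp
      ring
end
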